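/- arXiv:0803.3474 — 9 statements merged into one kernel-verified Lean document; each statement's English description precedes it below -/
import Mathlib

section
/- Let J ⊆ ℝ be an open interval, let c₂ be C² on J, c₁ be C¹ on J, c₀ continuous on J, and let P be a C³ nonvanishing function on J; set Q = 1/P. Define transformed coefficients c̃₂ = c₂ + 3Q'/Q, c̃₁ = c₁ + 2c₂Q'/Q + 3Q''/Q, and c̃₀ = c₀ + c₂Q''/Q + c₁Q'/Q + Q'''/Q on J. Then (i) a C³ function y satisfies y''' + c₂y'' + c₁y' + c₀y = 0 on J if and only if z = P·y satisfies z''' + c̃₂z'' + c̃₁z' + c̃₀z = 0 on J; and (ii) if P is C⁵, then the semi-invariants computed from the transformed coefficients coincide with the original ones: c̃₂' + c̃₂²/3 - c̃₁ = c₂' + c₂²/3 - c₁ and c̃₂''/3 - 2c̃₂³/27 + c̃₁c̃₂/3 - c̃₀ = c₂''/3 - 2c₂³/27 + c₁c₂/3 - c₀ on J. (That is, I₁ and I₀ are invariant under the transformation y → P·y.) -/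
open Set

lemma myEqOn_deriv {s : Set ℝ} (hs : IsOpen s) {f g : ℝ → ℝ} (h : Set.EqOn f g s) :
    Set.EqOn (deriv f) (deriv g) s := fun _ hx =>
  Filter.EventuallyEq.deriv_eq (h.eventuallyEq_of_mem (hs.mem_nhds hx))

lemma myDAt {s : Set ℝ} (hs : IsOpen s) {h : ℝ → ℝ} (hh : ContDiffOn ℝ 1 h s)
    {x : ℝ} (hx : x ∈ s) : HasDerivAt h (deriv h x) x :=
  (((hh.differentiableOn one_ne_zero).differentiableAt (hs.mem_nhds hx))).hasDerivAt

lemma myMul_deriv3 {s : Set ℝ} (hs : IsOpen s) {f g : ℝ → ℝ}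
    (hf : ContDiffOn ℝ 3 f s) (hg : ContDiffOn ℝ 3 g s) :
    ∀ x ∈ s,
      deriv (fun u => f u * g u) x = deriv f x * g x + f x * deriv g x ∧
      deriv (deriv (fun u => f u * g u)) x
        = deriv (deriv f) x * g x + 2 * (deriv f x * deriv g x) + f x * deriv (deriv g) x ∧
      deriv (deriv (deriv (fun u => f u * g u))) x
        = deriv (deriv (deriv f)) x * g x + 3 * (deriv (deriv f) x * deriv g x)
          + 3 * (deriv f x * deriv (deriv g) x) + f x * deriv (deriv (deriv g)) x := by
  have hf1 : ContDiffOn ℝ 2 (deriv f) s := hf.deriv_of_isOpen hs (by norm_num)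
  have hg1 : ContDiffOn ℝ 2 (deriv g) s := hg.deriv_of_isOpen hs (by norm_num)
  have hf2 : ContDiffOn ℝ 1 (deriv (deriv f)) s := hf1.deriv_of_isOpen hs (by norm_num)
  have hg2 : ContDiffOn ℝ 1 (deriv (deriv g)) s := hg1.deriv_of_isOpen hs (by norm_num)
  have dAt : ∀ {h : ℝ → ℝ}, ContDiffOn ℝ 1 h s → ∀ x ∈ s, DifferentiableAt ℝ h x := by
    intro h hh x hx
    exact (hh.differentiableOn one_ne_zero).differentiableAt (hs.mem_nhds hx)
  have h1 : Set.EqOn (deriv (fun u => f u * g u))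
      (fun u => deriv f u * g u + f u * deriv g u) s := fun x hx =>
    deriv_fun_mul (dAt (hf.of_le (by norm_num)) x hx) (dAt (hg.of_le (by norm_num)) x hx)
  have h2 : Set.EqOn (deriv (fun u => deriv f u * g u + f u * deriv g u))
      (fun u => deriv (deriv f) u * g u + 2 * (deriv f u * deriv g u)
        + f u * deriv (deriv g) u) s := by
    intro x hx
    rw [deriv_fun_add (((dAt (hf1.of_le (by norm_num)) x hx)).fun_mul (dAt (hg.of_le (by norm_num)) x hx))
          ((dAt (hf.of_le (by norm_num)) x hx).fun_mul (dAt (hg1.of_le (by norm_num)) x hx)),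
        deriv_fun_mul (dAt (hf1.of_le (by norm_num)) x hx) (dAt (hg.of_le (by norm_num)) x hx),
        deriv_fun_mul (dAt (hf.of_le (by norm_num)) x hx) (dAt (hg1.of_le (by norm_num)) x hx)]
    ring
  have h3 : ∀ x ∈ s, deriv (fun u => deriv (deriv f) u * g u + 2 * (deriv f u * deriv g u)
        + f u * deriv (deriv g) u) x
      = deriv (deriv (deriv f)) x * g x + 3 * (deriv (deriv f) x * deriv g x)
          + 3 * (deriv f x * deriv (deriv g) x) + f x * deriv (deriv (deriv g)) x := by
    intro x hx
    have d1 := (dAt hf2 x hx).fun_mul (dAt (hg.of_le (by norm_num)) x hx)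
    have d2 := ((dAt (hf1.of_le (by norm_num)) x hx).fun_mul
      (dAt (hg1.of_le (by norm_num)) x hx)).const_mul (2:ℝ)
    have d3 := (dAt (hf.of_le (by norm_num)) x hx).fun_mul (dAt hg2 x hx)
    rw [deriv_fun_add (d1.fun_add d2) d3, deriv_fun_add d1 d2,
        deriv_const_mul _ ((dAt (hf1.of_le (by norm_num)) x hx).fun_mul
          (dAt (hg1.of_le (by norm_num)) x hx)),
        deriv_fun_mul (dAt hf2 x hx) (dAt (hg.of_le (by norm_num)) x hx),
        deriv_fun_mul (dAt (hf1.of_le (by norm_num)) x hx) (dAt (hg1.of_le (by norm_num)) x hx),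
        deriv_fun_mul (dAt (hf.of_le (by norm_num)) x hx) (dAt hg2 x hx)]
    ring
  intro x hx
  refine ⟨h1 hx, ?_, ?_⟩
  · rw [myEqOn_deriv hs h1 hx, h2 hx]
  · rw [myEqOn_deriv hs (myEqOn_deriv hs h1) hx, myEqOn_deriv hs h2 hx, h3 x hx]

/-- (i) `y` solves `y''' + c₂y'' + c₁y' + c₀y = 0` iff `z = P·y` solves the
transformed equation with coefficients `c̃₂ = c₂ + 3Q'/Q`,
`c̃₁ = c₁ + 2c₂Q'/Q + 3Q''/Q`, `c̃₀ = c₀ + c₂Q''/Q + c₁Q'/Q + Q'''/Q` where `Q = 1/P`;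
(ii) if `P` is C⁵, the semi-invariants `I₁ = c₂' + c₂²/3 - c₁` and
`I₀ = c₂''/3 - 2c₂³/27 + c₁c₂/3 - c₀` are unchanged. -/
theorem stmt_1 (a b : ℝ) (J : Set ℝ) (hJ : J = Set.Ioo a b)
    (c₂ c₁ c₀ P : ℝ → ℝ)
    (hc₂ : ContDiffOn ℝ 2 c₂ J) (hc₁ : ContDiffOn ℝ 1 c₁ J) (hc₀ : ContinuousOn c₀ J)
    (hP : ContDiffOn ℝ 3 P J) (hPne : ∀ x ∈ J, P x ≠ 0)
    (Q : ℝ → ℝ) (hQ : ∀ x, Q x = 1 / P x)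
    (tc₂ tc₁ tc₀ : ℝ → ℝ)
    (htc₂ : ∀ x ∈ J, tc₂ x = c₂ x + 3 * deriv Q x / Q x)
    (htc₁ : ∀ x ∈ J, tc₁ x = c₁ x + 2 * c₂ x * deriv Q x / Q x
        + 3 * deriv (deriv Q) x / Q x)
    (htc₀ : ∀ x ∈ J, tc₀ x = c₀ x + c₂ x * deriv (deriv Q) x / Q x
        + c₁ x * deriv Q x / Q x + deriv (deriv (deriv Q)) x / Q x) :
    (∀ y : ℝ → ℝ, ContDiffOn ℝ 3 y J →
      ((∀ x ∈ J, deriv (deriv (deriv y)) x + c₂ x * deriv (deriv y) x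
          + c₁ x * deriv y x + c₀ x * y x = 0) ↔
        (∀ x ∈ J, deriv (deriv (deriv (fun u => P u * y u))) x
          + tc₂ x * deriv (deriv (fun u => P u * y u)) x
          + tc₁ x * deriv (fun u => P u * y u) x
          + tc₀ x * (P x * y x) = 0))) ∧
    (ContDiffOn ℝ 5 P J →
      ∀ x ∈ J,
        deriv tc₂ x + (tc₂ x) ^ 2 / 3 - tc₁ x
          = deriv c₂ x + (c₂ x) ^ 2 / 3 - c₁ x ∧
        deriv (deriv tc₂) x / 3 - 2 * (tc₂ x) ^ 3 / 27 + tc₁ x * tc₂ x / 3 - tc₀ x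
          = deriv (deriv c₂) x / 3 - 2 * (c₂ x) ^ 3 / 27 + c₁ x * c₂ x / 3 - c₀ x) := by
  have hJo : IsOpen J := hJ ▸ isOpen_Ioo
  have hQ3 : ContDiffOn ℝ 3 Q J :=
    (hP.inv hPne).congr fun x _ => by rw [hQ x, one_div]; rfl
  have hQne : ∀ x ∈ J, Q x ≠ 0 := fun x hx => by
    rw [hQ x]; exact one_div_ne_zero (hPne x hx)
  constructor
  · -- part (i)
    intro y hy
    have hz : ContDiffOn ℝ 3 (fun u => P u * y u) J := hP.mul hy
    have hyz : Set.EqOn (fun u => Q u * (P u * y u)) y J := fun u hu => by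
      have := hPne u hu
      show Q u * (P u * y u) = y u
      rw [hQ u]; field_simp
    have key : ∀ x ∈ J,
        deriv (deriv (deriv y)) x + c₂ x * deriv (deriv y) x
          + c₁ x * deriv y x + c₀ x * y x
        = Q x * (deriv (deriv (deriv (fun u => P u * y u))) x
          + tc₂ x * deriv (deriv (fun u => P u * y u)) x
          + tc₁ x * deriv (fun u => P u * y u) x
          + tc₀ x * (P x * y x)) := by
      intro x hx
      obtain ⟨e1, e2, e3⟩ := myMul_deriv3 hJo hQ3 hz x hx
      have d0 : y x = Q x * (P x * y x) := (hyz hx).symm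
      have d1 : deriv y x = deriv (fun u => Q u * (P u * y u)) x :=
        (myEqOn_deriv hJo hyz hx).symm
      have d2 : deriv (deriv y) x = deriv (deriv (fun u => Q u * (P u * y u))) x :=
        (myEqOn_deriv hJo (myEqOn_deriv hJo hyz) hx).symm
      have d3 : deriv (deriv (deriv y)) x
          = deriv (deriv (deriv (fun u => Q u * (P u * y u)))) x :=
        (myEqOn_deriv hJo (myEqOn_deriv hJo (myEqOn_deriv hJo hyz)) hx).symm
      rw [htc₂ x hx, htc₁ x hx, htc₀ x hx]
      nth_rewrite 1 [d0]
      rw [d1, d2, d3, e1, e2, e3]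
      have hq := hQne x hx
      field_simp
      ring
    constructor
    · intro h x hx
      have hk := key x hx
      rw [h x hx] at hk
      rcases mul_eq_zero.mp hk.symm with h' | h'
      · exact absurd h' (hQne x hx)
      · exact h'
    · intro h x hx
      rw [key x hx, h x hx, mul_zero]
  · -- part (ii)
    intro _ x hx
    have hQd : ContDiffOn ℝ 2 (deriv Q) J := hQ3.deriv_of_isOpen hJo (by norm_num)
    have hQdd : ContDiffOn ℝ 1 (deriv (deriv Q)) J := hQd.deriv_of_isOpen hJo (by norm_num)
    have hc₂d : ContDiffOn ℝ 1 (deriv c₂) J := hc₂.deriv_of_isOpen hJo (by norm_num)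
    have g1 : Set.EqOn (deriv tc₂)
        (fun u => deriv c₂ u
          + (3 * deriv (deriv Q) u * Q u - 3 * deriv Q u * deriv Q u) / Q u ^ 2) J := by
      intro u hu
      rw [myEqOn_deriv hJo (fun v hv => htc₂ v hv) hu]
      exact ((myDAt hJo (hc₂.of_le (by norm_num)) hu).add
        (((myDAt hJo (hQd.of_le (by norm_num)) hu).const_mul (3:ℝ)).div
          (myDAt hJo (hQ3.of_le (by norm_num)) hu) (hQne u hu))).deriv
    have hnum : HasDerivAt (fun u => 3 * deriv (deriv Q) u * Q u - 3 * deriv Q u * deriv Q u)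
        (3 * deriv (deriv (deriv Q)) x * Q x + 3 * deriv (deriv Q) x * deriv Q x
          - (3 * deriv (deriv Q) x * deriv Q x + 3 * deriv Q x * deriv (deriv Q) x)) x :=
      (((myDAt hJo hQdd hx).const_mul (3:ℝ)).mul (myDAt hJo (hQ3.of_le (by norm_num)) hx)).sub
        (((myDAt hJo (hQd.of_le (by norm_num)) hx).const_mul (3:ℝ)).mul
          (myDAt hJo (hQd.of_le (by norm_num)) hx))
    have hfull := (myDAt hJo hc₂d hx).fun_add
      (hnum.fun_div ((myDAt hJo (hQ3.of_le (by norm_num)) hx).fun_pow 2) (pow_ne_zero 2 (hQne x hx)))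
    have E2 := hfull.deriv
    have E2' : deriv (deriv tc₂) x
        = deriv (fun u => deriv c₂ u
          + (3 * deriv (deriv Q) u * Q u - 3 * deriv Q u * deriv Q u) / Q u ^ 2) x :=
      myEqOn_deriv hJo g1 hx
    have hq := hQne x hx
    constructor
    · rw [g1 hx, htc₂ x hx, htc₁ x hx]
      field_simp
      ring
    · rw [E2', E2, htc₂ x hx, htc₁ x hx, htc₀ x hx]
      field_simp
      ring
end

section
/- Let I, J ⊆ ℝ be open intervals, let I₁ be C¹ and I₀ continuous on J, let F : I → ℝ be C⁴ with F' never zero and F(I) ⊆ J, and let y be C³ on J with y''' = I₁y' + I₀y on J. Define the Schwarzian S(F) = F'''/F' - (3/2)(F''/F')² and the transformed invariants Ĩ₁(x) = F'(x)²·I₁(F(x)) - 2·S(F)(x) and Ĩ₀(x) = F'(x)·F''(x)·I₁(F(x)) + F'(x)³·I₀(F(x)) - (S(F))'(x). Then the function v(x) = y(F(x))/F'(x) is C³ on I and satisfies v''' = Ĩ₁v' + Ĩ₀v on I. -/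
/-- Change of independent variable `x → F(x)` in the normal form equation
`y''' = I₁ y' + I₀ y`: the function `v(x) = y(F(x))/F'(x)` is C³ and satisfies
`v''' = Ĩ₁ v' + Ĩ₀ v` with `Ĩ₁ = F'²·I₁∘F - 2S(F)` and
`Ĩ₀ = F'F''·I₁∘F + F'³·I₀∘F - S(F)'`, where `S(F)` is the Schwarzian. -/
theorem stmt_4 (a b a' b' : ℝ) (I J : Set ℝ)
    (hI : I = Set.Ioo a b) (hJ : J = Set.Ioo a' b')
    (I₁ I₀ : ℝ → ℝ) (hI₁ : ContDiffOn ℝ 1 I₁ J) (hI₀ : ContinuousOn I₀ J)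
    (F : ℝ → ℝ) (hF : ContDiffOn ℝ 4 F I)
    (hF' : ∀ x ∈ I, deriv F x ≠ 0) (hFI : Set.MapsTo F I J)
    (y : ℝ → ℝ) (hy : ContDiffOn ℝ 3 y J)
    (hode : ∀ u ∈ J, deriv (deriv (deriv y)) u = I₁ u * deriv y u + I₀ u * y u)
    (SF : ℝ → ℝ)
    (hSF : ∀ x ∈ I, SF x = deriv (deriv (deriv F)) x / deriv F x
        - (3 / 2) * (deriv (deriv F) x / deriv F x) ^ 2)
    (tI₁ tI₀ : ℝ → ℝ)
    (htI₁ : ∀ x ∈ I, tI₁ x = (deriv F x) ^ 2 * I₁ (F x) - 2 * SF x)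
    (htI₀ : ∀ x ∈ I, tI₀ x = deriv F x * deriv (deriv F) x * I₁ (F x)
        + (deriv F x) ^ 3 * I₀ (F x) - deriv SF x)
    (v : ℝ → ℝ) (hv : ∀ x ∈ I, v x = y (F x) / deriv F x) :
    ContDiffOn ℝ 3 v I ∧
      ∀ x ∈ I, deriv (deriv (deriv v)) x = tI₁ x * deriv v x + tI₀ x * v x := by
  have hIo : IsOpen I := hI ▸ isOpen_Ioo
  have hJo : IsOpen J := hJ ▸ isOpen_Ioo
  have hgC : ContDiffOn ℝ 3 (deriv F) I := hF.deriv_of_isOpen hIo (by norm_num)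
  have hg1C : ContDiffOn ℝ 2 (deriv (deriv F)) I := hgC.deriv_of_isOpen hIo (by norm_num)
  have hg2C : ContDiffOn ℝ 1 (deriv (deriv (deriv F))) I :=
    hg1C.deriv_of_isOpen hIo (by norm_num)
  have hy1C : ContDiffOn ℝ 2 (deriv y) J := hy.deriv_of_isOpen hJo (by norm_num)
  have hy2C : ContDiffOn ℝ 1 (deriv (deriv y)) J := hy1C.deriv_of_isOpen hJo (by norm_num)
  -- pointwise HasDerivAt facts
  have hDF : ∀ x ∈ I, HasDerivAt F (deriv F x) x := fun x hx =>
    ((hF.contDiffAt (hIo.mem_nhds hx)).differentiableAt (by norm_num)).hasDerivAt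
  have hDg : ∀ x ∈ I, HasDerivAt (deriv F) (deriv (deriv F) x) x := fun x hx =>
    ((hgC.contDiffAt (hIo.mem_nhds hx)).differentiableAt (by norm_num)).hasDerivAt
  have hDg1 : ∀ x ∈ I, HasDerivAt (deriv (deriv F)) (deriv (deriv (deriv F)) x) x :=
    fun x hx =>
    ((hg1C.contDiffAt (hIo.mem_nhds hx)).differentiableAt (by norm_num)).hasDerivAt
  have hDg2 : ∀ x ∈ I,
      HasDerivAt (deriv (deriv (deriv F))) (deriv (deriv (deriv (deriv F))) x) x :=
    fun x hx =>
    ((hg2C.contDiffAt (hIo.mem_nhds hx)).differentiableAt (by norm_num)).hasDerivAt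
  have hDy : ∀ u ∈ J, HasDerivAt y (deriv y u) u := fun u hu =>
    ((hy.contDiffAt (hJo.mem_nhds hu)).differentiableAt (by norm_num)).hasDerivAt
  have hDy1 : ∀ u ∈ J, HasDerivAt (deriv y) (deriv (deriv y) u) u := fun u hu =>
    ((hy1C.contDiffAt (hJo.mem_nhds hu)).differentiableAt (by norm_num)).hasDerivAt
  have hDy2 : ∀ u ∈ J, HasDerivAt (deriv (deriv y)) (I₁ u * deriv y u + I₀ u * y u) u :=
    fun u hu => hode u hu ▸
    ((hy2C.contDiffAt (hJo.mem_nhds hu)).differentiableAt (by norm_num)).hasDerivAt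
  -- the auxiliary explicit functions
  set V : ℝ → ℝ := fun t => y (F t) / deriv F t with hV
  set V1 : ℝ → ℝ := fun t => deriv y (F t) - y (F t) * deriv (deriv F) t / deriv F t ^ 2
    with hV1
  set V2 : ℝ → ℝ := fun t => deriv (deriv y) (F t) * deriv F t
      - deriv y (F t) * deriv (deriv F) t / deriv F t
      - y (F t) * deriv (deriv (deriv F)) t / deriv F t ^ 2
      + 2 * y (F t) * deriv (deriv F) t ^ 2 / deriv F t ^ 3 with hV2
  have hVC : ContDiffOn ℝ 3 V I :=
    (hy.comp (hF.of_le (by norm_num)) hFI).div hgC hF'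
  have hvC : ContDiffOn ℝ 3 v I := hVC.congr hv
  refine ⟨hvC, fun x hx => ?_⟩
  have hw : F x ∈ J := hFI hx
  have hg0 : deriv F x ≠ 0 := hF' x hx
  have hvV : v =ᶠ[nhds x] V := Filter.eventuallyEq_of_mem (hIo.mem_nhds hx)
    (fun t ht => hv t ht)
  -- first derivative
  have hdv1 : ∀ z ∈ I, HasDerivAt v (V1 z) z := by
    intro z hz
    have hzV : v =ᶠ[nhds z] V := Filter.eventuallyEq_of_mem (hIo.mem_nhds hz)
      (fun t ht => hv t ht)
    have h := (((hDy (F z) (hFI hz)).comp z (hDF z hz)).div (hDg z hz) (hF' z hz))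
    have h' := h.congr_of_eventuallyEq hzV
    have hgz : deriv F z ≠ 0 := hF' z hz
    convert h' using 1
    any_goals rfl
    simp only [hV1, Function.comp]
    field_simp
  have hdveq : ∀ z ∈ I, deriv v z = V1 z := fun z hz => (hdv1 z hz).deriv
  -- second derivative
  have hdv2 : ∀ z ∈ I, HasDerivAt (deriv v) (V2 z) z := by
    intro z hz
    have hzV : deriv v =ᶠ[nhds z] V1 := Filter.eventuallyEq_of_mem (hIo.mem_nhds hz)
      (fun t ht => hdveq t ht)
    have h := (((hDy1 (F z) (hFI hz)).comp z (hDF z hz)).sub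
      ((((hDy (F z) (hFI hz)).comp z (hDF z hz)).mul (hDg1 z hz)).div
        ((hDg z hz).pow 2) (pow_ne_zero 2 (hF' z hz))))
    have h' := h.congr_of_eventuallyEq hzV
    have hgz : deriv F z ≠ 0 := hF' z hz
    convert h' using 1
    any_goals rfl
    simp only [hV2, Function.comp]
    norm_num
    field_simp
    ring
  have hdv2eq : ∀ z ∈ I, deriv (deriv v) z = V2 z := fun z hz => (hdv2 z hz).deriv
  -- third derivative at x
  have hzV2 : deriv (deriv v) =ᶠ[nhds x] V2 := Filter.eventuallyEq_of_mem
    (hIo.mem_nhds hx) (fun t ht => hdv2eq t ht)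
  have hA := ((hDy2 (F x) hw).comp x (hDF x hx)).mul (hDg x hx)
  have hB := (((hDy1 (F x) hw).comp x (hDF x hx)).mul (hDg1 x hx)).div
      (hDg x hx) hg0
  have hC := (((hDy (F x) hw).comp x (hDF x hx)).mul (hDg2 x hx)).div
      ((hDg x hx).pow 2) (pow_ne_zero 2 hg0)
  have hD := ((((hDy (F x) hw).comp x (hDF x hx)).const_mul 2).mul
      ((hDg1 x hx).pow 2)).div ((hDg x hx).pow 3) (pow_ne_zero 3 hg0)
  have hV2d := ((hA.sub hB).sub hC).add hD
  have hdv3 := (hV2d.congr_of_eventuallyEq hzV2).deriv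
  -- derivative of SF at x
  have hSFd : deriv SF x = (deriv (deriv (deriv (deriv F)) ) x * deriv F x
      - deriv (deriv (deriv F)) x * deriv (deriv F) x) / deriv F x ^ 2
      - 3 / 2 * (2 * (deriv (deriv F) x / deriv F x) ^ 1 *
        ((deriv (deriv (deriv F)) x * deriv F x - deriv (deriv F) x * deriv (deriv F) x)
          / deriv F x ^ 2)) := by
    have hSFe : SF =ᶠ[nhds x] fun t => deriv (deriv (deriv F)) t / deriv F t
        - 3 / 2 * (deriv (deriv F) t / deriv F t) ^ 2 :=
      Filter.eventuallyEq_of_mem (hIo.mem_nhds hx) (fun t ht => hSF t ht)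
    have h := ((hDg2 x hx).div (hDg x hx) hg0).sub
      ((((hDg1 x hx).div (hDg x hx) hg0).pow 2).const_mul (3 / 2))
    rw [hSFe.deriv_eq]
    exact h.deriv
  rw [hdv3, hdveq x hx, hv x hx, htI₁ x hx, htI₀ x hx, hSF x hx, hSFd]
  simp only [hV1, hV2, Function.comp]
  norm_num
  field_simp
  ring
end

section
/- Let k ∈ ℝ with k ≠ 0, let I₁ and I₀ be functions on (0, ∞), and let F(x) = x^k on (0, ∞). Define the transformed invariants Ĩ₁(x) = F'(x)²·I₁(F(x)) - 2S(F)(x) and Ĩ₀(x) = F'(x)F''(x)·I₁(F(x)) + F'(x)³·I₀(F(x)) - (S(F))'(x), where S(F) = F'''/F' - (3/2)(F''/F')². Define the shifted invariants J₁(x) = x²I₁(x) + 1 and J₂(x) = x³I₀(x) + x²I₁(x), and analogously J̃₁(x) = x²Ĩ₁(x) + 1 and J̃₂(x) = x³Ĩ₀(x) + x²Ĩ₁(x). Then for all x > 0: J̃₁(x) = k²·J₁(x^k) and J̃₂(x) = k³·J₂(x^k). -/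
/-- Transformation rule of the shifted invariants `J₁ = x²I₁ + 1`,
`J₂ = x³I₀ + x²I₁` under the power transformation `x → x^k`:
`J̃₁(x) = k²·J₁(x^k)` and `J̃₂(x) = k³·J₂(x^k)`. -/
theorem stmt_5 (k : ℝ) (hk : k ≠ 0) (I₁ I₀ : ℝ → ℝ)
    (F : ℝ → ℝ) (hF : ∀ x : ℝ, 0 < x → F x = x ^ k)
    (SF : ℝ → ℝ)
    (hSF : ∀ x : ℝ, 0 < x → SF x = deriv (deriv (deriv F)) x / deriv F x
        - (3 / 2) * (deriv (deriv F) x / deriv F x) ^ 2)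
    (tI₁ tI₀ : ℝ → ℝ)
    (htI₁ : ∀ x : ℝ, 0 < x → tI₁ x = (deriv F x) ^ 2 * I₁ (F x) - 2 * SF x)
    (htI₀ : ∀ x : ℝ, 0 < x → tI₀ x = deriv F x * deriv (deriv F) x * I₁ (F x)
        + (deriv F x) ^ 3 * I₀ (F x) - deriv SF x)
    (J₁ J₂ tJ₁ tJ₂ : ℝ → ℝ)
    (hJ₁ : ∀ x : ℝ, 0 < x → J₁ x = x ^ 2 * I₁ x + 1)
    (hJ₂ : ∀ x : ℝ, 0 < x → J₂ x = x ^ 3 * I₀ x + x ^ 2 * I₁ x)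
    (htJ₁ : ∀ x : ℝ, 0 < x → tJ₁ x = x ^ 2 * tI₁ x + 1)
    (htJ₂ : ∀ x : ℝ, 0 < x → tJ₂ x = x ^ 3 * tI₀ x + x ^ 2 * tI₁ x) :
    ∀ x : ℝ, 0 < x → tJ₁ x = k ^ 2 * J₁ (x ^ k) ∧ tJ₂ x = k ^ 3 * J₂ (x ^ k) := by
  -- first derivative of F on (0,∞)
  have hdF : ∀ y : ℝ, 0 < y → deriv F y = k * y ^ (k - 1) := by
    intro y hy
    have h1 : F =ᶠ[nhds y] fun z => z ^ k := by
      filter_upwards [eventually_gt_nhds hy] with z hz using hF z hz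
    rw [h1.deriv_eq, Real.deriv_rpow_const]
  -- second derivative
  have hddF : ∀ y : ℝ, 0 < y → deriv (deriv F) y = k * ((k - 1) * y ^ (k - 2)) := by
    intro y hy
    have h1 : deriv F =ᶠ[nhds y] fun z => k * z ^ (k - 1) := by
      filter_upwards [eventually_gt_nhds hy] with z hz using hdF z hz
    rw [h1.deriv_eq]
    have := ((Real.hasDerivAt_rpow_const (p := k - 1) (Or.inl hy.ne')).const_mul k).deriv
    rw [this, show k - 1 - 1 = k - 2 by ring]
  -- third derivative
  have hdddF : ∀ y : ℝ, 0 < y →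
      deriv (deriv (deriv F)) y = k * ((k - 1) * ((k - 2) * y ^ (k - 3))) := by
    intro y hy
    have h1 : deriv (deriv F) =ᶠ[nhds y] fun z => k * ((k - 1) * z ^ (k - 2)) := by
      filter_upwards [eventually_gt_nhds hy] with z hz using hddF z hz
    rw [h1.deriv_eq]
    have := (((Real.hasDerivAt_rpow_const (p := k - 2)
      (Or.inl hy.ne')).const_mul (k - 1)).const_mul k).deriv
    rw [this, show k - 2 - 1 = k - 3 by ring]
  -- rpow subtraction facts
  have hpow : ∀ y : ℝ, 0 < y →
      y ^ (k - 1) = y ^ k / y ∧ y ^ (k - 2) = y ^ k / y ^ 2 ∧ y ^ (k - 3) = y ^ k / y ^ 3 := by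
    intro y hy
    have e1 : y ^ (1 : ℝ) = y := Real.rpow_one y
    have e2 : y ^ (2 : ℝ) = y ^ 2 := by
      rw [show (2 : ℝ) = ((2 : ℕ) : ℝ) by norm_num, Real.rpow_natCast]
    have e3 : y ^ (3 : ℝ) = y ^ 3 := by
      rw [show (3 : ℝ) = ((3 : ℕ) : ℝ) by norm_num, Real.rpow_natCast]
    refine ⟨?_, ?_, ?_⟩
    · rw [Real.rpow_sub hy, e1]
    · rw [Real.rpow_sub hy, e2]
    · rw [Real.rpow_sub hy, e3]
  -- value of the Schwarzian
  have hSFval : ∀ y : ℝ, 0 < y → SF y = (1 - k ^ 2) / 2 * (y ^ 2)⁻¹ := by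
    intro y hy
    have ht : (0 : ℝ) < y ^ k := Real.rpow_pos_of_pos hy k
    obtain ⟨e1, e2, e3⟩ := hpow y hy
    rw [hSF y hy, hdF y hy, hddF y hy, hdddF y hy, e1, e2, e3]
    field_simp
    ring
  -- derivative of the Schwarzian
  have hdSF : ∀ y : ℝ, 0 < y → deriv SF y = (k ^ 2 - 1) / y ^ 3 := by
    intro y hy
    have h1 : SF =ᶠ[nhds y] fun z => (1 - k ^ 2) / 2 * (z ^ 2)⁻¹ := by
      filter_upwards [eventually_gt_nhds hy] with z hz using hSFval z hz
    rw [h1.deriv_eq]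
    have hy2 : (y : ℝ) ^ 2 ≠ 0 := pow_ne_zero 2 hy.ne'
    have := (((hasDerivAt_pow 2 y).inv hy2).const_mul ((1 - k ^ 2) / 2)).deriv
    simp only [Pi.inv_apply] at this
    rw [this]
    field_simp
    ring
  intro x hx
  have hx0 : x ≠ 0 := hx.ne'
  have ht : (0 : ℝ) < x ^ k := Real.rpow_pos_of_pos hx k
  obtain ⟨e1, e2, e3⟩ := hpow x hx
  constructor
  · rw [htJ₁ x hx, htI₁ x hx, hJ₁ _ ht, hdF x hx, hSFval x hx, hF x hx, e1]
    field_simp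
    ring
  · rw [htJ₂ x hx, htI₀ x hx, htI₁ x hx, hJ₂ _ ht, hdF x hx, hddF x hx, hdSF x hx,
      hSFval x hx, hF x hx, e1, e2]
    field_simp
    ring
end

section
/- Let I, J ⊆ ℝ be open intervals, let I₁ be C¹ and I₀ continuous on J, and let F : I → ℝ be C⁵ with F' never zero and F(I) ⊆ J. Define Ĩ₁(x) = F'(x)²·I₁(F(x)) - 2S(F)(x) and Ĩ₀(x) = F'(x)F''(x)·I₁(F(x)) + F'(x)³·I₀(F(x)) - (S(F))'(x), where S(F) = F'''/F' - (3/2)(F''/F')². Then r = I₁' - 2I₀ is a relative invariant of weight 3; that is, for all x ∈ I: Ĩ₁'(x) - 2Ĩ₀(x) = F'(x)³·(I₁'(F(x)) - 2I₀(F(x))). -/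
/-- `r = I₁' - 2I₀` is a relative invariant of weight 3 under a change of
independent variable `x → F(x)`: `Ĩ₁' - 2Ĩ₀ = F'³·(I₁'∘F - 2I₀∘F)`. -/
theorem stmt_6 (a b a' b' : ℝ) (I J : Set ℝ)
    (hI : I = Set.Ioo a b) (hJ : J = Set.Ioo a' b')
    (I₁ I₀ : ℝ → ℝ) (hI₁ : ContDiffOn ℝ 1 I₁ J) (hI₀ : ContinuousOn I₀ J)
    (F : ℝ → ℝ) (hF : ContDiffOn ℝ 5 F I)
    (hF' : ∀ x ∈ I, deriv F x ≠ 0) (hFI : Set.MapsTo F I J)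
    (SF : ℝ → ℝ)
    (hSF : ∀ x ∈ I, SF x = deriv (deriv (deriv F)) x / deriv F x
        - (3 / 2) * (deriv (deriv F) x / deriv F x) ^ 2)
    (tI₁ tI₀ : ℝ → ℝ)
    (htI₁ : ∀ x ∈ I, tI₁ x = (deriv F x) ^ 2 * I₁ (F x) - 2 * SF x)
    (htI₀ : ∀ x ∈ I, tI₀ x = deriv F x * deriv (deriv F) x * I₁ (F x)
        + (deriv F x) ^ 3 * I₀ (F x) - deriv SF x) :
    ∀ x ∈ I, deriv tI₁ x - 2 * tI₀ x
      = (deriv F x) ^ 3 * (deriv I₁ (F x) - 2 * I₀ (F x)) := by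
  intro x hx
  have hIo : IsOpen I := hI ▸ isOpen_Ioo
  have hJo : IsOpen J := hJ ▸ isOpen_Ioo
  have hnx : I ∈ nhds x := hIo.mem_nhds hx
  -- regularity facts
  have hF1 : ContDiffOn ℝ 4 (deriv F) I := hF.deriv_of_isOpen hIo (by norm_num)
  have hF2 : ContDiffOn ℝ 3 (deriv (deriv F)) I := hF1.deriv_of_isOpen hIo (by norm_num)
  have hF3 : ContDiffOn ℝ 2 (deriv (deriv (deriv F))) I := hF2.deriv_of_isOpen hIo (by norm_num)
  have hFd : HasDerivAt F (deriv F x) x :=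
    ((hF.contDiffAt hnx).differentiableAt (by norm_num)).hasDerivAt
  have hF1d : HasDerivAt (deriv F) (deriv (deriv F) x) x :=
    ((hF1.contDiffAt hnx).differentiableAt (by norm_num)).hasDerivAt
  have hF2d : DifferentiableAt ℝ (deriv (deriv F)) x :=
    (hF2.contDiffAt hnx).differentiableAt (by norm_num)
  have hF3d : DifferentiableAt ℝ (deriv (deriv (deriv F))) x :=
    (hF3.contDiffAt hnx).differentiableAt (by norm_num)
  have hne : deriv F x ≠ 0 := hF' x hx
  have hI₁d : HasDerivAt I₁ (deriv I₁ (F x)) (F x) :=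
    ((hI₁.contDiffAt (hJo.mem_nhds (hFI hx))).differentiableAt one_ne_zero).hasDerivAt
  -- SF is differentiable at x
  have hSFeq : SF =ᶠ[nhds x] fun y => deriv (deriv (deriv F)) y / deriv F y
      - (3 / 2) * (deriv (deriv F) y / deriv F y) ^ 2 :=
    Filter.eventuallyEq_of_mem hnx hSF
  have hSFd : DifferentiableAt ℝ SF x := by
    rw [hSFeq.differentiableAt_iff]
    exact (hF3d.div hF1d.differentiableAt hne).sub
      (((hF2d.div hF1d.differentiableAt hne).pow 2).const_mul _)
  -- derivative of tI₁
  have h1 : HasDerivAt (fun y => (deriv F y) ^ 2)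
      (2 * deriv F x ^ 1 * deriv (deriv F) x) x := by
    simpa using hF1d.fun_pow 2
  have h2 : HasDerivAt (fun y => I₁ (F y)) (deriv I₁ (F x) * deriv F x) x :=
    hI₁d.comp x hFd
  have hg : HasDerivAt (fun y => (deriv F y) ^ 2 * I₁ (F y) - 2 * SF y)
      ((2 * deriv F x ^ 1 * deriv (deriv F) x) * I₁ (F x)
        + (deriv F x) ^ 2 * (deriv I₁ (F x) * deriv F x) - 2 * deriv SF x) x :=
    (h1.mul h2).sub (hSFd.hasDerivAt.const_mul 2)
  have hteq : tI₁ =ᶠ[nhds x] fun y => (deriv F y) ^ 2 * I₁ (F y) - 2 * SF y :=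
    Filter.eventuallyEq_of_mem hnx htI₁
  have hderiv : deriv tI₁ x = (2 * deriv F x ^ 1 * deriv (deriv F) x) * I₁ (F x)
      + (deriv F x) ^ 2 * (deriv I₁ (F x) * deriv F x) - 2 * deriv SF x := by
    rw [hteq.deriv_eq, hg.deriv]
  rw [hderiv, htI₀ x hx]
  ring
end

section
/- Let I, J ⊆ ℝ be open intervals, let I₁ and I₀ be C^∞ on J, and let F : I → ℝ be C^∞ with F' never zero and F(I) ⊆ J. Define Ĩ₁(x) = F'(x)²·I₁(F(x)) - 2S(F)(x) and Ĩ₀(x) = F'(x)F''(x)·I₁(F(x)) + F'(x)³·I₀(F(x)) - (S(F))'(x), where S(F) = F'''/F' - (3/2)(F''/F')². Let r = I₁' - 2I₀ and r̃ = Ĩ₁' - 2Ĩ₀, and suppose r(F(x)) ≠ 0 for all x ∈ I. Define L₁ = (6rr'' + 9I₁r² - 7(r')²)³ / r⁸ from I₁, r, and L̃₁ = (6r̃r̃'' + 9Ĩ₁r̃² - 7(r̃')²)³ / r̃⁸ from Ĩ₁, r̃. Then L₁ is an absolute invariant: for all x ∈ I, L̃₁(x) = L₁(F(x)). -/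
/-- `L₁ = (6rr'' + 9I₁r² - 7r'²)³/r⁸`, with `r = I₁' - 2I₀`, is an absolute
invariant under a change of independent variable `x → F(x)`: `L̃₁(x) = L₁(F(x))`. -/
theorem stmt_7 (a b a' b' : ℝ) (I J : Set ℝ)
    (hI : I = Set.Ioo a b) (hJ : J = Set.Ioo a' b')
    (I₁ I₀ : ℝ → ℝ) (hI₁ : ContDiffOn ℝ (⊤ : ℕ∞) I₁ J) (hI₀ : ContDiffOn ℝ (⊤ : ℕ∞) I₀ J)
    (F : ℝ → ℝ) (hF : ContDiffOn ℝ (⊤ : ℕ∞) F I)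
    (hF' : ∀ x ∈ I, deriv F x ≠ 0) (hFI : Set.MapsTo F I J)
    (SF : ℝ → ℝ)
    (hSF : ∀ x ∈ I, SF x = deriv (deriv (deriv F)) x / deriv F x
        - (3 / 2) * (deriv (deriv F) x / deriv F x) ^ 2)
    (tI₁ tI₀ : ℝ → ℝ)
    (htI₁ : ∀ x ∈ I, tI₁ x = (deriv F x) ^ 2 * I₁ (F x) - 2 * SF x)
    (htI₀ : ∀ x ∈ I, tI₀ x = deriv F x * deriv (deriv F) x * I₁ (F x)
        + (deriv F x) ^ 3 * I₀ (F x) - deriv SF x)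
    (r tr : ℝ → ℝ)
    (hr : ∀ u ∈ J, r u = deriv I₁ u - 2 * I₀ u)
    (htr : ∀ x ∈ I, tr x = deriv tI₁ x - 2 * tI₀ x)
    (hr0 : ∀ x ∈ I, r (F x) ≠ 0)
    (L₁ tL₁ : ℝ → ℝ)
    (hL₁ : ∀ u ∈ J, L₁ u = (6 * r u * deriv (deriv r) u + 9 * I₁ u * (r u) ^ 2
        - 7 * (deriv r u) ^ 2) ^ 3 / (r u) ^ 8)
    (htL₁ : ∀ x ∈ I, tL₁ x = (6 * tr x * deriv (deriv tr) x + 9 * tI₁ x * (tr x) ^ 2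
        - 7 * (deriv tr x) ^ 2) ^ 3 / (tr x) ^ 8) :
    ∀ x ∈ I, tL₁ x = L₁ (F x) := by
  have openI : IsOpen I := hI ▸ isOpen_Ioo
  have openJ : IsOpen J := hJ ▸ isOpen_Ioo
  -- smoothness of iterated derivatives
  have hF1 : ContDiffOn ℝ (⊤ : ℕ∞) (deriv F) I := hF.deriv_of_isOpen openI (by simp)
  have hF2 : ContDiffOn ℝ (⊤ : ℕ∞) (deriv (deriv F)) I := hF1.deriv_of_isOpen openI (by simp)
  have hF3 : ContDiffOn ℝ (⊤ : ℕ∞) (deriv (deriv (deriv F))) I :=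
    hF2.deriv_of_isOpen openI (by simp)
  have hI₁' : ContDiffOn ℝ (⊤ : ℕ∞) (deriv I₁) J := hI₁.deriv_of_isOpen openJ (by simp)
  -- generic differentiability helper
  have dAt : ∀ {g : ℝ → ℝ} {s : Set ℝ}, IsOpen s → ContDiffOn ℝ (⊤ : ℕ∞) g s →
      ∀ y ∈ s, DifferentiableAt ℝ g y := fun hs hg y hy =>
    (hg.differentiableOn (by simp)).differentiableAt (hs.mem_nhds hy)
  -- the formula for r
  set g : ℝ → ℝ := fun u => deriv I₁ u - 2 * I₀ u with hgdef
  have hg : ContDiffOn ℝ (⊤ : ℕ∞) g J := hI₁'.sub (contDiffOn_const.mul hI₀)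
  have hg' : ContDiffOn ℝ (⊤ : ℕ∞) (deriv g) J := hg.deriv_of_isOpen openJ (by simp)
  have hrev : ∀ u ∈ J, r =ᶠ[nhds u] g := fun u hu =>
    Filter.eventuallyEq_of_mem (openJ.mem_nhds hu) hr
  have hrdev : ∀ u ∈ J, deriv r =ᶠ[nhds u] deriv g := fun u hu => (hrev u hu).deriv
  have hrdiff : ∀ u ∈ J, DifferentiableAt ℝ r u := fun u hu =>
    ((hrev u hu).differentiableAt_iff).mpr (dAt openJ hg u hu)
  have hrddiff : ∀ u ∈ J, DifferentiableAt ℝ (deriv r) u := fun u hu =>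
    ((hrdev u hu).differentiableAt_iff).mpr (dAt openJ hg' u hu)
  -- Step 1: tr = F'^3 · r∘F on I
  have tr_eq : ∀ x ∈ I, tr x = (deriv F x) ^ 3 * r (F x) := by
    intro x hx
    have hu : F x ∈ J := hFI hx
    have ha1 : deriv F x ≠ 0 := hF' x hx
    have hd1 : HasDerivAt F (deriv F x) x := (dAt openI hF x hx).hasDerivAt
    have hd2 : HasDerivAt (deriv F) (deriv (deriv F) x) x := (dAt openI hF1 x hx).hasDerivAt
    have hd3 : HasDerivAt (deriv (deriv F)) (deriv (deriv (deriv F)) x) x :=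
      (dAt openI hF2 x hx).hasDerivAt
    -- SF is differentiable at x
    have hSFev : SF =ᶠ[nhds x] fun y => deriv (deriv (deriv F)) y / deriv F y
        - (3 / 2) * (deriv (deriv F) y / deriv F y) ^ 2 :=
      Filter.eventuallyEq_of_mem (openI.mem_nhds hx) hSF
    have hSFdiff : DifferentiableAt ℝ SF x := by
      rw [hSFev.differentiableAt_iff]
      exact (((dAt openI hF3 x hx).div (dAt openI hF1 x hx) ha1)).sub
        ((differentiableAt_const _).mul
          (((dAt openI hF2 x hx).div (dAt openI hF1 x hx) ha1).pow 2))
    -- tI₁ has derivative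
    have hI₁F : HasDerivAt (fun y => I₁ (F y)) (deriv I₁ (F x) * deriv F x) x :=
      ((dAt openJ hI₁ _ hu).hasDerivAt).comp x hd1
    have htI₁ev : tI₁ =ᶠ[nhds x] fun y => (deriv F y) ^ 2 * I₁ (F y) - 2 * SF y :=
      Filter.eventuallyEq_of_mem (openI.mem_nhds hx) htI₁
    have hdtI₁ : HasDerivAt tI₁
        (2 * deriv F x * deriv (deriv F) x * I₁ (F x)
          + (deriv F x) ^ 2 * (deriv I₁ (F x) * deriv F x)
          - 2 * deriv SF x) x := by
      rw [htI₁ev.hasDerivAt_iff]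
      have h := ((hd2.fun_pow 2).fun_mul hI₁F).fun_sub ((hSFdiff.hasDerivAt).const_mul 2)
      convert h using 1
      push_cast
      ring
    rw [htr x hx, hdtI₁.deriv, htI₀ x hx, hr _ hu]
    ring
  -- Step 2: derivative of tr on I
  have tr'_eq : ∀ x ∈ I, HasDerivAt tr
      (3 * deriv F x ^ 2 * deriv (deriv F) x * r (F x)
        + (deriv F x) ^ 3 * (deriv r (F x) * deriv F x)) x := by
    intro x hx
    have hu : F x ∈ J := hFI hx
    have hd1 : HasDerivAt F (deriv F x) x := (dAt openI hF x hx).hasDerivAt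
    have hd2 : HasDerivAt (deriv F) (deriv (deriv F) x) x := (dAt openI hF1 x hx).hasDerivAt
    have hrF : HasDerivAt (fun y => r (F y)) (deriv r (F x) * deriv F x) x :=
      ((hrdiff _ hu).hasDerivAt).comp x hd1
    have hev : tr =ᶠ[nhds x] fun y => (deriv F y) ^ 3 * r (F y) :=
      Filter.eventuallyEq_of_mem (openI.mem_nhds hx) tr_eq
    rw [hev.hasDerivAt_iff]
    have := ((hd2.fun_pow 3)).fun_mul hrF
    -- derivative of (deriv F)^3 is 3 * (deriv F)^2 * deriv (deriv F)
    have h3 : HasDerivAt (fun y => (deriv F y) ^ 3)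
        (3 * deriv F x ^ 2 * deriv (deriv F) x) x := by
      have := hd2.fun_pow 3
      simpa [mul_comm, mul_assoc] using this
    simpa using h3.fun_mul hrF
  -- Step 3: second derivative of tr on I
  have tr''_eq : ∀ x ∈ I, deriv (deriv tr) x =
      (6 * deriv F x * (deriv (deriv F) x) ^ 2 + 3 * (deriv F x) ^ 2
          * deriv (deriv (deriv F)) x) * r (F x)
        + 7 * (deriv F x) ^ 3 * deriv (deriv F) x * deriv r (F x)
        + (deriv F x) ^ 5 * deriv (deriv r) (F x) := by
    intro x hx
    have hu : F x ∈ J := hFI hx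
    have hd1 : HasDerivAt F (deriv F x) x := (dAt openI hF x hx).hasDerivAt
    have hd2 : HasDerivAt (deriv F) (deriv (deriv F) x) x := (dAt openI hF1 x hx).hasDerivAt
    have hd3 : HasDerivAt (deriv (deriv F)) (deriv (deriv (deriv F)) x) x :=
      (dAt openI hF2 x hx).hasDerivAt
    have hrF : HasDerivAt (fun y => r (F y)) (deriv r (F x) * deriv F x) x :=
      ((hrdiff _ hu).hasDerivAt).comp x hd1
    have hrdF : HasDerivAt (fun y => deriv r (F y)) (deriv (deriv r) (F x) * deriv F x) x :=
      ((hrddiff _ hu).hasDerivAt).comp x hd1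
    have hev : deriv tr =ᶠ[nhds x] fun y =>
        3 * deriv F y ^ 2 * deriv (deriv F) y * r (F y)
          + (deriv F y) ^ 3 * (deriv r (F y) * deriv F y) :=
      Filter.eventuallyEq_of_mem (openI.mem_nhds hx) fun y hy => (tr'_eq y hy).deriv
    rw [hev.deriv_eq]
    have hA : HasDerivAt (fun y => 3 * deriv F y ^ 2 * deriv (deriv F) y * r (F y))
        ((3 * (2 * deriv F x * deriv (deriv F) x) * deriv (deriv F) x
            + 3 * deriv F x ^ 2 * deriv (deriv (deriv F)) x) * r (F x)
          + 3 * deriv F x ^ 2 * deriv (deriv F) x * (deriv r (F x) * deriv F x)) x := by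
      have h1 : HasDerivAt (fun y => 3 * deriv F y ^ 2)
          (3 * (2 * deriv F x * deriv (deriv F) x)) x := by
        simpa [mul_comm, mul_assoc] using (hd2.fun_pow 2).const_mul 3
      exact ((h1.fun_mul hd3).fun_mul hrF)
    have hB : HasDerivAt (fun y => (deriv F y) ^ 3 * (deriv r (F y) * deriv F y))
        ((3 * deriv F x ^ 2 * deriv (deriv F) x) * (deriv r (F x) * deriv F x)
          + (deriv F x) ^ 3 * (deriv (deriv r) (F x) * deriv F x * deriv F x
            + deriv r (F x) * deriv (deriv F) x)) x := by
      have h3 : HasDerivAt (fun y => (deriv F y) ^ 3)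
          (3 * deriv F x ^ 2 * deriv (deriv F) x) x := by
        simpa [mul_comm, mul_assoc] using hd2.fun_pow 3
      exact h3.fun_mul (hrdF.fun_mul hd2)
    rw [(hA.fun_add hB).deriv]
    ring
  -- conclusion
  intro x hx
  have hu : F x ∈ J := hFI hx
  have ha1 : deriv F x ≠ 0 := hF' x hx
  have hR : r (F x) ≠ 0 := hr0 x hx
  rw [htL₁ x hx, hL₁ (F x) hu]
  have htrd : deriv tr x = 3 * deriv F x ^ 2 * deriv (deriv F) x * r (F x)
      + (deriv F x) ^ 3 * (deriv r (F x) * deriv F x) := (tr'_eq x hx).deriv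
  have key : 6 * tr x * deriv (deriv tr) x + 9 * tI₁ x * (tr x) ^ 2
      - 7 * (deriv tr x) ^ 2 = (deriv F x) ^ 8 *
      (6 * r (F x) * deriv (deriv r) (F x) + 9 * I₁ (F x) * (r (F x)) ^ 2
        - 7 * (deriv r (F x)) ^ 2) := by
    rw [tr_eq x hx, tr''_eq x hx, htrd, htI₁ x hx, hSF x hx]
    field_simp
    ring
  rw [key, tr_eq x hx]
  rw [mul_pow]
  field_simp
end

section
/- Let I, J ⊆ ℝ be open intervals, let I₁ and I₀ be C^∞ on J, and let F : I → ℝ be C^∞ with F' never zero and F(I) ⊆ J. Define Ĩ₁(x) = F'(x)²·I₁(F(x)) - 2S(F)(x) and Ĩ₀(x) = F'(x)F''(x)·I₁(F(x)) + F'(x)³·I₀(F(x)) - (S(F))'(x), where S(F) = F'''/F' - (3/2)(F''/F')². Let r = I₁' - 2I₀ and r̃ = Ĩ₁' - 2Ĩ₀, and suppose r(F(x)) ≠ 0 for all x ∈ I. Define L₂ = (27I₁'r³ - 18I₁r²r' + 56(r')³ - 72r''r'r + 18r'''r²)/r⁴ from I₁, r, and L̃₂ analogously from Ĩ₁, r̃.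 Then L₂ is an absolute invariant: for all x ∈ I, L̃₂(x) = L₂(F(x)). -/
lemma aux_contDiffOn_deriv {f : ℝ → ℝ} {s : Set ℝ} (hs : IsOpen s)
    (hf : ContDiffOn ℝ (⊤ : ℕ∞) f s) : ContDiffOn ℝ (⊤ : ℕ∞) (deriv f) s :=
  hf.deriv_of_isOpen hs le_rfl

lemma aux_hasDerivAt {f : ℝ → ℝ} {s : Set ℝ} (hs : IsOpen s) (hf : ContDiffOn ℝ (⊤ : ℕ∞) f s)
    {x : ℝ} (hx : x ∈ s) : HasDerivAt f (deriv f x) x :=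
  ((hf.differentiableOn (by simp)).differentiableAt (hs.mem_nhds hx)).hasDerivAt

lemma aux_deriv_eq {f g : ℝ → ℝ} {s : Set ℝ} (hs : IsOpen s) (h : Set.EqOn f g s) {x : ℝ}
    (hx : x ∈ s) : deriv f x = deriv g x :=
  Filter.EventuallyEq.deriv_eq (h.eventuallyEq_of_mem (hs.mem_nhds hx))

/-- `L₂ = (27I₁'r³ - 18I₁r²r' + 56r'³ - 72r''r'r + 18r'''r²)/r⁴`, with
`r = I₁' - 2I₀`, is an absolute invariant under a change of independent
variable `x → F(x)`: `L̃₂(x) = L₂(F(x))`. -/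
theorem stmt_8 (a b a' b' : ℝ) (I J : Set ℝ)
    (hI : I = Set.Ioo a b) (hJ : J = Set.Ioo a' b')
    (I₁ I₀ : ℝ → ℝ) (hI₁ : ContDiffOn ℝ (⊤ : ℕ∞) I₁ J) (hI₀ : ContDiffOn ℝ (⊤ : ℕ∞) I₀ J)
    (F : ℝ → ℝ) (hF : ContDiffOn ℝ (⊤ : ℕ∞) F I)
    (hF' : ∀ x ∈ I, deriv F x ≠ 0) (hFI : Set.MapsTo F I J)
    (SF : ℝ → ℝ)
    (hSF : ∀ x ∈ I, SF x = deriv (deriv (deriv F)) x / deriv F x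
        - (3 / 2) * (deriv (deriv F) x / deriv F x) ^ 2)
    (tI₁ tI₀ : ℝ → ℝ)
    (htI₁ : ∀ x ∈ I, tI₁ x = (deriv F x) ^ 2 * I₁ (F x) - 2 * SF x)
    (htI₀ : ∀ x ∈ I, tI₀ x = deriv F x * deriv (deriv F) x * I₁ (F x)
        + (deriv F x) ^ 3 * I₀ (F x) - deriv SF x)
    (r tr : ℝ → ℝ)
    (hr : ∀ u ∈ J, r u = deriv I₁ u - 2 * I₀ u)
    (htr : ∀ x ∈ I, tr x = deriv tI₁ x - 2 * tI₀ x)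
    (hr0 : ∀ x ∈ I, r (F x) ≠ 0)
    (L₂ tL₂ : ℝ → ℝ)
    (hL₂ : ∀ u ∈ J, L₂ u = (27 * deriv I₁ u * (r u) ^ 3 - 18 * I₁ u * (r u) ^ 2 * deriv r u
        + 56 * (deriv r u) ^ 3 - 72 * deriv (deriv r) u * deriv r u * r u
        + 18 * deriv (deriv (deriv r)) u * (r u) ^ 2) / (r u) ^ 4)
    (htL₂ : ∀ x ∈ I, tL₂ x = (27 * deriv tI₁ x * (tr x) ^ 3 - 18 * tI₁ x * (tr x) ^ 2 * deriv tr x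
        + 56 * (deriv tr x) ^ 3 - 72 * deriv (deriv tr) x * deriv tr x * tr x
        + 18 * deriv (deriv (deriv tr)) x * (tr x) ^ 2) / (tr x) ^ 4) :
    ∀ x ∈ I, tL₂ x = L₂ (F x) := by
  have hIo : IsOpen I := hI ▸ isOpen_Ioo
  have hJo : IsOpen J := hJ ▸ isOpen_Ioo
  -- smoothness of iterated derivatives
  have hF1 : ContDiffOn ℝ (⊤ : ℕ∞) (deriv F) I := aux_contDiffOn_deriv hIo hF
  have hF2 : ContDiffOn ℝ (⊤ : ℕ∞) (deriv (deriv F)) I := aux_contDiffOn_deriv hIo hF1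
  have hF3 : ContDiffOn ℝ (⊤ : ℕ∞) (deriv (deriv (deriv F))) I := aux_contDiffOn_deriv hIo hF2
  have hI₁d : ContDiffOn ℝ (⊤ : ℕ∞) (deriv I₁) J := aux_contDiffOn_deriv hJo hI₁
  have hrC : ContDiffOn ℝ (⊤ : ℕ∞) r J := by
    refine (hI₁d.sub ((contDiffOn_const (c := (2:ℝ))).mul hI₀)).congr fun u hu => ?_
    rw [hr u hu]
  have hr1 : ContDiffOn ℝ (⊤ : ℕ∞) (deriv r) J := aux_contDiffOn_deriv hJo hrC
  have hr2 : ContDiffOn ℝ (⊤ : ℕ∞) (deriv (deriv r)) J := aux_contDiffOn_deriv hJo hr1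
  -- pointwise derivative facts
  have dF1 : ∀ y ∈ I, HasDerivAt F (deriv F y) y := fun y hy => aux_hasDerivAt hIo hF hy
  have dF2 : ∀ y ∈ I, HasDerivAt (deriv F) (deriv (deriv F) y) y :=
    fun y hy => aux_hasDerivAt hIo hF1 hy
  have dF3 : ∀ y ∈ I, HasDerivAt (deriv (deriv F)) (deriv (deriv (deriv F)) y) y :=
    fun y hy => aux_hasDerivAt hIo hF2 hy
  have dF4 : ∀ y ∈ I, HasDerivAt (deriv (deriv (deriv F)))
      (deriv (deriv (deriv (deriv F))) y) y := fun y hy => aux_hasDerivAt hIo hF3 hy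
  have dI₁F : ∀ y ∈ I, HasDerivAt (fun z => I₁ (F z)) (deriv I₁ (F y) * deriv F y) y :=
    fun y hy => (aux_hasDerivAt hJo hI₁ (hFI hy)).comp y (dF1 y hy)
  have dRF : ∀ y ∈ I, HasDerivAt (fun z => r (F z)) (deriv r (F y) * deriv F y) y :=
    fun y hy => (aux_hasDerivAt hJo hrC (hFI hy)).comp y (dF1 y hy)
  have dR1F : ∀ y ∈ I, HasDerivAt (fun z => deriv r (F z))
      (deriv (deriv r) (F y) * deriv F y) y :=
    fun y hy => (aux_hasDerivAt hJo hr1 (hFI hy)).comp y (dF1 y hy)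
  have dR2F : ∀ y ∈ I, HasDerivAt (fun z => deriv (deriv r) (F z))
      (deriv (deriv (deriv r)) (F y) * deriv F y) y :=
    fun y hy => (aux_hasDerivAt hJo hr2 (hFI hy)).comp y (dF1 y hy)
  -- derivative of SF
  have dSF : ∀ y ∈ I, HasDerivAt SF
      (deriv (deriv (deriv (deriv F))) y / deriv F y
        - 4 * deriv (deriv F) y * deriv (deriv (deriv F)) y / deriv F y ^ 2
        + 3 * deriv (deriv F) y ^ 3 / deriv F y ^ 3) y := by
    intro y hy
    have h1 := (dF4 y hy).div (dF2 y hy) (hF' y hy)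
    have h2 := (dF3 y hy).div (dF2 y hy) (hF' y hy)
    have h3 := ((h2.pow 2).const_mul ((3 : ℝ) / 2))
    have h4 := h1.sub h3
    have h5 := h4.congr_of_eventuallyEq
      ((Set.EqOn.eventuallyEq_of_mem (fun z hz => hSF z hz) (hIo.mem_nhds hy)))
    refine h5.congr_deriv (Eq.symm ?_)
    simp only [Pi.div_apply, Nat.cast_ofNat]
    norm_num
    field_simp [hF' y hy]
    ring
  -- derivative of tI₁
  have dtI₁ : ∀ y ∈ I, HasDerivAt tI₁
      (2 * deriv F y * deriv (deriv F) y * I₁ (F y) + deriv F y ^ 3 * deriv I₁ (F y)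
        - 2 * (deriv (deriv (deriv (deriv F))) y / deriv F y
          - 4 * deriv (deriv F) y * deriv (deriv (deriv F)) y / deriv F y ^ 2
          + 3 * deriv (deriv F) y ^ 3 / deriv F y ^ 3)) y := by
    intro y hy
    have h1 := ((dF2 y hy).pow 2).mul (dI₁F y hy)
    have h2 := (dSF y hy).const_mul (2 : ℝ)
    have h4 := h1.sub h2
    have h5 := h4.congr_of_eventuallyEq
      ((Set.EqOn.eventuallyEq_of_mem (fun z hz => htI₁ z hz) (hIo.mem_nhds hy)))
    refine h5.congr_deriv (Eq.symm ?_)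
    push_cast [Pi.pow_apply, Pi.mul_apply, Pi.add_apply]
    ring
  -- tr is F'^3 · (r ∘ F)
  have htrEq : ∀ y ∈ I, tr y = deriv F y ^ 3 * r (F y) := by
    intro y hy
    rw [htr y hy, (dtI₁ y hy).deriv, htI₀ y hy, (dSF y hy).deriv, hr (F y) (hFI hy)]
    ring
  -- first derivative of tr
  have e1 : ∀ y ∈ I, deriv tr y = 3 * deriv F y ^ 2 * deriv (deriv F) y * r (F y)
      + deriv F y ^ 4 * deriv r (F y) := by
    intro y hy
    rw [aux_deriv_eq hIo (show Set.EqOn tr (fun z => deriv F z ^ 3 * r (F z)) I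
      from fun z hz => htrEq z hz) hy]
    have H := ((dF2 y hy).pow 3).mul (dRF y hy)
    have hD : deriv (fun z => deriv F z ^ 3 * r (F z)) y = _ := H.deriv
    rw [hD]
    push_cast [Pi.pow_apply, Pi.mul_apply, Pi.add_apply]
    ring
  -- second derivative of tr
  have e2 : ∀ y ∈ I, deriv (deriv tr) y =
      (6 * deriv F y * deriv (deriv F) y ^ 2 + 3 * deriv F y ^ 2 * deriv (deriv (deriv F)) y)
        * r (F y) + 7 * deriv F y ^ 3 * deriv (deriv F) y * deriv r (F y)
        + deriv F y ^ 5 * deriv (deriv r) (F y) := by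
    intro y hy
    rw [aux_deriv_eq hIo (show Set.EqOn (deriv tr)
      (fun z => 3 * deriv F z ^ 2 * deriv (deriv F) z * r (F z)
        + deriv F z ^ 4 * deriv r (F z)) I from fun z hz => e1 z hz) hy]
    have H := (((((dF2 y hy).pow 2).const_mul (3 : ℝ)).mul (dF3 y hy)).mul (dRF y hy)).add
        (((dF2 y hy).pow 4).mul (dR1F y hy))
    have hD : deriv (fun z => 3 * deriv F z ^ 2 * deriv (deriv F) z * r (F z)
        + deriv F z ^ 4 * deriv r (F z)) y = _ := H.deriv
    rw [hD]
    push_cast [Pi.pow_apply, Pi.mul_apply, Pi.add_apply]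
    ring
  -- third derivative of tr
  have e3 : ∀ y ∈ I, deriv (deriv (deriv tr)) y =
      (6 * deriv (deriv F) y ^ 3 + 18 * deriv F y * deriv (deriv F) y * deriv (deriv (deriv F)) y
        + 3 * deriv F y ^ 2 * deriv (deriv (deriv (deriv F))) y) * r (F y)
      + (27 * deriv F y ^ 2 * deriv (deriv F) y ^ 2
        + 10 * deriv F y ^ 3 * deriv (deriv (deriv F)) y) * deriv r (F y)
      + 12 * deriv F y ^ 4 * deriv (deriv F) y * deriv (deriv r) (F y)
      + deriv F y ^ 6 * deriv (deriv (deriv r)) (F y) := by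
    intro y hy
    rw [aux_deriv_eq hIo (show Set.EqOn (deriv (deriv tr))
      (fun z => (6 * deriv F z * deriv (deriv F) z ^ 2
        + 3 * deriv F z ^ 2 * deriv (deriv (deriv F)) z) * r (F z)
        + 7 * deriv F z ^ 3 * deriv (deriv F) z * deriv r (F z)
        + deriv F z ^ 5 * deriv (deriv r) (F z)) I from fun z hz => e2 z hz) hy]
    have t1 := ((((dF2 y hy).const_mul (6 : ℝ)).mul ((dF3 y hy).pow 2)).add
        ((((dF2 y hy).pow 2).const_mul (3 : ℝ)).mul (dF4 y hy))).mul (dRF y hy)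
    have t2 := ((((dF2 y hy).pow 3).const_mul (7 : ℝ)).mul (dF3 y hy)).mul (dR1F y hy)
    have t3 := ((dF2 y hy).pow 5).mul (dR2F y hy)
    have H := (t1.add t2).add t3
    have hD : deriv (fun z => (6 * deriv F z * deriv (deriv F) z ^ 2
        + 3 * deriv F z ^ 2 * deriv (deriv (deriv F)) z) * r (F z)
        + 7 * deriv F z ^ 3 * deriv (deriv F) z * deriv r (F z)
        + deriv F z ^ 5 * deriv (deriv r) (F z)) y = _ := H.deriv
    rw [hD]
    push_cast [Pi.pow_apply, Pi.mul_apply, Pi.add_apply]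
    ring
  -- conclusion
  intro x hx
  rw [htL₂ x hx, hL₂ (F x) (hFI hx), (dtI₁ x hx).deriv, htI₁ x hx, hSF x hx,
    htrEq x hx, e1 x hx, e2 x hx, e3 x hx]
  have hA := hF' x hx
  have hR := hr0 x hx
  field_simp
  ring
end

section
/- Let J ⊆ ℝ be an open interval and let I₁, I₀ be C^∞ functions on J. Set r = I₁' - 2I₀ and assume r is nonvanishing on J. Define L₁ = (6rr'' + 9I₁r² - 7(r')²)³/r⁸ and L₂ = (27I₁'r³ - 18I₁r²r' + 56(r')³ - 72r''r'r + 18r'''r²)/r⁴, and assume L₁' is nonvanishing on J. Define s = L₂L₁/L₁' and t = L₁/s³, and assume s and t are nonvanishing on J. Then the invariants can be recovered from s and t: I₁ = (st³ - 6t''t + 7(t')²)/(9t²) and I₀ = ((s' - 9)t⁴ + t'st³ - 6t'''t² + 20t''t't - 14(t')³)/(18t³) on J. -/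
/-- Recovery of the normal form invariants `I₁, I₀` from the intermediate
relative invariants `s = L₂L₁/L₁'` and `t = L₁/s³`:
`I₁ = (st³ - 6t''t + 7t'²)/(9t²)` and
`I₀ = ((s'-9)t⁴ + t'st³ - 6t'''t² + 20t''t't - 14t'³)/(18t³)`. -/
theorem stmt_9 (a b : ℝ) (J : Set ℝ) (hJ : J = Set.Ioo a b)
    (I₁ I₀ : ℝ → ℝ) (hI₁ : ContDiffOn ℝ (⊤ : ℕ∞) I₁ J) (hI₀ : ContDiffOn ℝ (⊤ : ℕ∞) I₀ J)
    (r : ℝ → ℝ) (hr : ∀ x ∈ J, r x = deriv I₁ x - 2 * I₀ x)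
    (hr0 : ∀ x ∈ J, r x ≠ 0)
    (L₁ L₂ : ℝ → ℝ)
    (hL₁ : ∀ x ∈ J, L₁ x = (6 * r x * deriv (deriv r) x + 9 * I₁ x * (r x) ^ 2
        - 7 * (deriv r x) ^ 2) ^ 3 / (r x) ^ 8)
    (hL₂ : ∀ x ∈ J, L₂ x = (27 * deriv I₁ x * (r x) ^ 3 - 18 * I₁ x * (r x) ^ 2 * deriv r x
        + 56 * (deriv r x) ^ 3 - 72 * deriv (deriv r) x * deriv r x * r x
        + 18 * deriv (deriv (deriv r)) x * (r x) ^ 2) / (r x) ^ 4)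
    (hL₁' : ∀ x ∈ J, deriv L₁ x ≠ 0)
    (s t : ℝ → ℝ)
    (hs : ∀ x ∈ J, s x = L₂ x * L₁ x / deriv L₁ x)
    (ht : ∀ x ∈ J, t x = L₁ x / (s x) ^ 3)
    (hs0 : ∀ x ∈ J, s x ≠ 0) (ht0 : ∀ x ∈ J, t x ≠ 0) :
    ∀ x ∈ J,
      I₁ x = (s x * (t x) ^ 3 - 6 * deriv (deriv t) x * t x + 7 * (deriv t x) ^ 2)
          / (9 * (t x) ^ 2) ∧
      I₀ x = ((deriv s x - 9) * (t x) ^ 4 + deriv t x * s x * (t x) ^ 3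
          - 6 * deriv (deriv (deriv t)) x * (t x) ^ 2
          + 20 * deriv (deriv t) x * deriv t x * t x - 14 * (deriv t x) ^ 3)
          / (18 * (t x) ^ 3) := by
  have hJo : IsOpen J := by rw [hJ]; exact isOpen_Ioo
  set g : ℝ → ℝ := fun y => deriv I₁ y - 2 * I₀ y with hgdef
  have hg : ContDiffOn ℝ (⊤ : ℕ∞) g J := by
    rw [hgdef]
    exact (hI₁.deriv_of_isOpen hJo (by simp)).sub (contDiffOn_const.mul hI₀)
  have hd : ∀ f : ℝ → ℝ, ContDiffOn ℝ (⊤ : ℕ∞) f J → ∀ y ∈ J, HasDerivAt f (deriv f y) y := by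
    intro f hf y hy
    exact ((hf.differentiableOn (by simp)).differentiableAt (hJo.mem_nhds hy)).hasDerivAt
  set g1 : ℝ → ℝ := deriv g with hg1def
  set g2 : ℝ → ℝ := deriv g1 with hg2def
  set g3 : ℝ → ℝ := deriv g2 with hg3def
  have hg1 : ContDiffOn ℝ (⊤ : ℕ∞) g1 J := hg.deriv_of_isOpen hJo (by simp)
  have hg2 : ContDiffOn ℝ (⊤ : ℕ∞) g2 J := hg1.deriv_of_isOpen hJo (by simp)
  have hg3 : ContDiffOn ℝ (⊤ : ℕ∞) g3 J := hg2.deriv_of_isOpen hJo (by simp)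
  -- r and its derivatives agree with g and its on J
  have hrg : Set.EqOn r g J := fun y hy => hr y hy
  have hg0 : ∀ y ∈ J, g y ≠ 0 := fun y hy => by rw [← hrg hy]; exact hr0 y hy
  have hr1 : ∀ y ∈ J, deriv r y = g1 y := fun y hy =>
    (Filter.eventuallyEq_of_mem (hJo.mem_nhds hy) hrg).deriv_eq
  have hr2 : ∀ y ∈ J, deriv (deriv r) y = g2 y := fun y hy =>
    (Filter.eventuallyEq_of_mem (hJo.mem_nhds hy) (fun z hz => hr1 z hz)).deriv_eq
  have hr3 : ∀ y ∈ J, deriv (deriv (deriv r)) y = g3 y := fun y hy =>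
    (Filter.eventuallyEq_of_mem (hJo.mem_nhds hy) (fun z hz => hr2 z hz)).deriv_eq
  -- the key polynomial combinations
  set p : ℝ → ℝ := fun y => 6 * g y * g2 y + 9 * I₁ y * (g y) ^ 2 - 7 * (g1 y) ^ 2 with hpdef
  set q : ℝ → ℝ := fun y => 27 * deriv I₁ y * (g y) ^ 3 - 18 * I₁ y * (g y) ^ 2 * g1 y
      + 56 * (g1 y) ^ 3 - 72 * g2 y * g1 y * g y + 18 * g3 y * (g y) ^ 2 with hqdef
  have hgd : ∀ y ∈ J, HasDerivAt g (g1 y) y := fun y hy => hd g hg y hy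
  have hg1d : ∀ y ∈ J, HasDerivAt g1 (g2 y) y := fun y hy => hd g1 hg1 y hy
  have hg2d : ∀ y ∈ J, HasDerivAt g2 (g3 y) y := fun y hy => hd g2 hg2 y hy
  have hI₁d : ∀ y ∈ J, HasDerivAt I₁ (deriv I₁ y) y := fun y hy => hd I₁ hI₁ y hy
  -- derivative of p
  have hpd : ∀ y ∈ J, HasDerivAt p
      (6 * g1 y * g2 y + 6 * g y * g3 y + 9 * deriv I₁ y * (g y) ^ 2
        + 18 * I₁ y * g y * g1 y - 14 * g1 y * g2 y) y := by
    intro y hy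
    have H := ((((hgd y hy).const_mul 6).mul (hg2d y hy)).add
        (((hI₁d y hy).const_mul 9).mul ((hgd y hy).pow 2))).sub
        (((hg1d y hy).pow 2).const_mul 7)
    have hv : 6 * g1 y * g2 y + 6 * g y * g3 y + 9 * deriv I₁ y * (g y) ^ 2
        + 18 * I₁ y * g y * g1 y - 14 * g1 y * g2 y
        = (6 * g1 y * g2 y + 6 * g y * g3 y
          + (9 * deriv I₁ y * (g y) ^ 2 + 9 * I₁ y * (↑2 * g y ^ (2 - 1) * g1 y)))
          - 7 * (↑2 * g1 y ^ (2 - 1) * g2 y) := by norm_num; ring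
    rw [hpdef, hv]
    exact H
  -- L₁ agrees on J with Φ := p³/g⁸
  have hL₁g : Set.EqOn L₁ (fun y => (p y) ^ 3 / (g y) ^ 8) J := by
    intro y hy
    rw [hL₁ y hy, hrg hy, hr1 y hy, hr2 y hy, hpdef]
  -- derivative of L₁ on J
  have hL1d : ∀ y ∈ J, deriv L₁ y = (p y) ^ 2 * q y / (g y) ^ 9 := by
    intro y hy
    have hgy := hg0 y hy
    have H : HasDerivAt (fun y => (p y) ^ 3 / (g y) ^ 8) _ y :=
      ((hpd y hy).pow 3).div ((hgd y hy).pow 8) (pow_ne_zero 8 hgy)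
    rw [(Filter.eventuallyEq_of_mem (hJo.mem_nhds hy) hL₁g).deriv_eq, H.deriv]
    rw [hpdef, hqdef]
    field_simp
    simp only [Pi.pow_apply, Nat.cast_ofNat]
    ring
  -- nonvanishing of p and q on J
  have hpq0 : ∀ y ∈ J, p y ≠ 0 ∧ q y ≠ 0 := by
    intro y hy
    have h := hL₁' y hy
    rw [hL1d y hy] at h
    constructor
    · intro h0; rw [h0] at h; simp at h
    · intro h0; rw [h0] at h; simp at h
  -- s = p/g³ on J
  have hsg : Set.EqOn s (fun y => p y / (g y) ^ 3) J := by
    intro y hy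
    have hgy := hg0 y hy
    have hpy := (hpq0 y hy).1
    have hqy := (hpq0 y hy).2
    have hL2y : L₂ y = q y / (g y) ^ 4 := by
      rw [hL₂ y hy, hrg hy, hr1 y hy, hr2 y hy, hr3 y hy, hqdef]
    rw [hs y hy, hL2y, hL₁g hy, hL1d y hy]
    field_simp
  -- t = g on J
  have htg : Set.EqOn t g J := by
    intro y hy
    have hgy := hg0 y hy
    have hpy := (hpq0 y hy).1
    rw [ht y hy, hsg hy, hL₁g hy]
    field_simp
  -- derivatives of t on J
  have ht1 : ∀ y ∈ J, deriv t y = g1 y := fun y hy =>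
    (Filter.eventuallyEq_of_mem (hJo.mem_nhds hy) htg).deriv_eq
  have ht2 : ∀ y ∈ J, deriv (deriv t) y = g2 y := fun y hy =>
    (Filter.eventuallyEq_of_mem (hJo.mem_nhds hy) (fun z hz => ht1 z hz)).deriv_eq
  have ht3 : ∀ y ∈ J, deriv (deriv (deriv t)) y = g3 y := fun y hy =>
    (Filter.eventuallyEq_of_mem (hJo.mem_nhds hy) (fun z hz => ht2 z hz)).deriv_eq
  intro x hx
  have hgx := hg0 x hx
  have hI0x : I₀ x = (deriv I₁ x - g x) / 2 := by
    have := hr x hx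
    rw [hrg hx] at this
    rw [hgdef] at this ⊢
    linarith [this]
  have hsx : HasDerivAt (fun y => p y / (g y) ^ 3) _ x :=
    (hpd x hx).div ((hgd x hx).pow 3) (pow_ne_zero 3 hgx)
  have hds : deriv s x = ((6 * g1 x * g2 x + 6 * g x * g3 x + 9 * deriv I₁ x * (g x) ^ 2
      + 18 * I₁ x * g x * g1 x - 14 * g1 x * g2 x) * (g x) ^ 3
      - p x * (3 * (g x) ^ 2 * g1 x)) / ((g x) ^ 3) ^ 2 := by
    rw [(Filter.eventuallyEq_of_mem (hJo.mem_nhds hx) hsg).deriv_eq, hsx.deriv]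
    norm_num
  constructor
  · rw [hsg hx, htg hx, ht1 x hx, ht2 x hx, hpdef]
    field_simp
    ring
  · rw [hsg hx, htg hx, ht1 x hx, ht2 x hx, ht3 x hx, hds, hI0x, hpdef]
    field_simp
    ring
end

section
/- Let K be a field and let p, q, N, D ∈ K[X] with q ≠ 0, D ≠ 0, p coprime to q, N coprime to D, and p/q a nonconstant element of the field of rational functions K(X). Suppose the rational function N/D decomposes through F = p/q, i.e., there exist polynomials Ñ, D̃ ∈ K[X] such that, in K(X), D̃(p/q) ≠ 0 and N/D = Ñ(p/q)/D̃(p/q). Then the bivariate polynomial p(X)q(Y) - p(Y)q(X) divides N(X)D(Y) - N(Y)D(X) in K[X, Y]. -/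
/- ### Auxiliary definitions and lemmas -/

/-- "Homogenized evaluation": `∑_{i ≤ m} f(A_i) u^i v^(m-i)`. -/
noncomputable def hE {K S : Type*} [Field K] [CommRing S] (f : K →+* S)
    (A : Polynomial K) (m : ℕ) (u v : S) : S :=
  ∑ i ∈ Finset.range (m + 1), f (A.coeff i) * (u ^ i * v ^ (m - i))

lemma hE_map {K S S' : Type*} [Field K] [CommRing S] [CommRing S'] (f : K →+* S) (g : S →+* S')
    (A : Polynomial K) (m : ℕ) (u v : S) :
    g (hE f A m u v) = hE (g.comp f) A m (g u) (g v) := by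
  simp [hE, map_sum, map_mul, map_pow]

lemma bracket_dvd {S : Type*} [CommRing S] (u v u' v' : S) {i j m : ℕ} (hi : i ≤ m) (hj : j ≤ m) :
    (u * v' - u' * v) ∣
      u ^ i * v ^ (m - i) * (u' ^ j * v' ^ (m - j)) -
        u' ^ i * v' ^ (m - i) * (u ^ j * v ^ (m - j)) := by
  rcases le_total i j with hij | hij
  · obtain ⟨k, rfl⟩ : ∃ k, j = i + k := ⟨j - i, by omega⟩
    obtain ⟨l, rfl⟩ : ∃ l, m = i + k + l := ⟨m - (i + k), by omega⟩
    have h1 : i + k + l - i = k + l := by omega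
    have h2 : i + k + l - (i + k) = l := by omega
    rw [h1, h2]
    have hd : (u * v' - u' * v) ∣ (u' * v) ^ k - (u * v') ^ k := by
      have := sub_dvd_pow_sub_pow (u' * v) (u * v') k
      rwa [show u * v' - u' * v = -(u' * v - u * v') by ring, neg_dvd]
    obtain ⟨w, hw⟩ := hd
    exact ⟨u ^ i * u' ^ i * v ^ l * v' ^ l * w, by
      linear_combination (u ^ i * u' ^ i * v ^ l * v' ^ l) * hw⟩
  · obtain ⟨k, rfl⟩ : ∃ k, i = j + k := ⟨i - j, by omega⟩
    obtain ⟨l, rfl⟩ : ∃ l, m = j + k + l := ⟨m - (j + k), by omega⟩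
    have h1 : j + k + l - j = k + l := by omega
    have h2 : j + k + l - (j + k) = l := by omega
    rw [h1, h2]
    obtain ⟨w, hw⟩ := sub_dvd_pow_sub_pow (u * v') (u' * v) k
    exact ⟨u ^ j * u' ^ j * v ^ l * v' ^ l * w, by
      linear_combination (u ^ j * u' ^ j * v ^ l * v' ^ l) * hw⟩

lemma key_dvd {K S : Type*} [Field K] [CommRing S] (f : K →+* S) (A B : Polynomial K) (m : ℕ)
    (u v u' v' : S) :
    (u * v' - u' * v) ∣
      hE f A m u v * hE f B m u' v' - hE f A m u' v' * hE f B m u v := by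
  simp only [hE, Finset.sum_mul_sum, ← Finset.sum_sub_distrib]
  refine Finset.dvd_sum fun i hi => Finset.dvd_sum fun j hj => ?_
  have hi' : i ≤ m := by simpa using Nat.lt_succ_iff.mp (Finset.mem_range.mp hi)
  have hj' : j ≤ m := by simpa using Nat.lt_succ_iff.mp (Finset.mem_range.mp hj)
  have := (bracket_dvd u v u' v' hi' hj').mul_left (f (A.coeff i) * f (B.coeff j))
  convert this using 1
  ring

lemma hE_ratFunc {K : Type*} [Field K] (p q : Polynomial K) (hq : q ≠ 0) (A : Polynomial K)
    {m : ℕ} (hm : A.natDegree < m + 1) :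
    algebraMap (Polynomial K) (RatFunc K) (hE (algebraMap K (Polynomial K)) A m p q)
      = Polynomial.aeval
          (algebraMap (Polynomial K) (RatFunc K) p / algebraMap (Polynomial K) (RatFunc K) q) A
        * (algebraMap (Polynomial K) (RatFunc K) q) ^ m := by
  set φ := algebraMap (Polynomial K) (RatFunc K) with hφ
  have hφq : φ q ≠ 0 := by
    simpa using (map_ne_zero_iff φ (IsFractionRing.injective _ _)).mpr hq
  rw [hE_map, Polynomial.aeval_eq_sum_range' hm, Finset.sum_mul]
  refine Finset.sum_congr rfl fun i hi => ?_
  have hi' : i ≤ m := Nat.lt_succ_iff.mp (Finset.mem_range.mp hi)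
  have hcomp : φ.comp (algebraMap K (Polynomial K)) = algebraMap K (RatFunc K) := by
    rw [hφ, ← IsScalarTower.algebraMap_eq]
  rw [hcomp, Algebra.smul_def]
  have : (φ p / φ q) ^ i * φ q ^ m = φ p ^ i * φ q ^ (m - i) := by
    rw [div_pow, div_mul_eq_mul_div, eq_comm, eq_div_iff (pow_ne_zero i hφq), mul_assoc,
      ← pow_add]
    congr 2
    omega
  rw [mul_assoc, this]

open Polynomial in
lemma descend_prim {R : Type*} [CommRing R] [IsDomain R] [StrongNormalizedGCDMonoid R]
    {A g : R[X]} {c : R} (hA : A.IsPrimitive) (hc : c ≠ 0) (h : A ∣ C c * g) : A ∣ g := by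
  rcases eq_or_ne g 0 with rfl | hg
  · simp
  have h0 : C c * g ≠ 0 := mul_ne_zero (by simpa using hc) hg
  rw [← hA.dvd_primPart_iff_dvd h0, primPart_mul h0] at h
  rcases isUnit_primPart_C c with ⟨u, hu⟩
  rw [← hu, Units.dvd_mul_left] at h
  exact (hA.dvd_primPart_iff_dvd hg).mp h

open Polynomial in
lemma prim_A {K : Type*} [Field K] (p q : Polynomial K) (hq : q ≠ 0) (hpq : IsCoprime p q)
    (hnc : ¬ ∃ e : K, p = Polynomial.C e * q) :
    (p.map (algebraMap K (Polynomial K)) * Polynomial.C q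
      - Polynomial.C p * q.map (algebraMap K (Polynomial K))).IsPrimitive := by
  intro c hc
  rw [C_dvd_iff_dvd_coeff] at hc
  have hcoeff : ∀ j, c ∣ C (p.coeff j) * q - p * C (q.coeff j) := by
    intro j
    have := hc j
    simpa [coeff_sub, coeff_mul_C, coeff_C_mul, coeff_map, Polynomial.algebraMap_eq] using this
  by_cases hprop : ∀ j k, p.coeff j * q.coeff k = p.coeff k * q.coeff j
  · exfalso
    have hk0 : q.coeff q.natDegree ≠ 0 := mt Polynomial.leadingCoeff_eq_zero.mp hq
    set k0 := q.natDegree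
    refine hnc ⟨p.coeff k0 / q.coeff k0, ?_⟩
    ext j
    rw [coeff_C_mul, div_mul_eq_mul_div, eq_div_iff hk0]
    rw [hprop j k0]
  · push_neg at hprop
    obtain ⟨j, k, hjk⟩ := hprop
    set lam := p.coeff j * q.coeff k - p.coeff k * q.coeff j with hlam
    have hlam0 : lam ≠ 0 := sub_ne_zero.mpr hjk
    have h1 : c ∣ C lam * p := by
      have := ((hcoeff j).mul_left (C (p.coeff k))).sub ((hcoeff k).mul_left (C (p.coeff j)))
      have heq : C (p.coeff k) * (C (p.coeff j) * q - p * C (q.coeff j))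
          - C (p.coeff j) * (C (p.coeff k) * q - p * C (q.coeff k)) = C lam * p := by
        rw [hlam, map_sub, map_mul, map_mul]; ring
      rwa [heq] at this
    have h2 : c ∣ C lam * q := by
      have := ((hcoeff j).mul_left (C (q.coeff k))).sub ((hcoeff k).mul_left (C (q.coeff j)))
      have heq : C (q.coeff k) * (C (p.coeff j) * q - p * C (q.coeff j))
          - C (q.coeff j) * (C (p.coeff k) * q - p * C (q.coeff k)) = C lam * q := by
        rw [hlam, map_sub, map_mul, map_mul]; ring
      rwa [heq] at this
    have hu : IsUnit (C lam : Polynomial K) := isUnit_C.mpr (isUnit_iff_ne_zero.mpr hlam0)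
    exact hpq.isUnit_of_dvd' (hu.dvd_mul_left.mp h1) (hu.dvd_mul_left.mp h2)

/-- The algebra isomorphism `K[X₀, X₁] ≃ (K[Y])[X]` sending `X₀` to the outer variable and
`X₁` to the inner one. -/
noncomputable def e2 (K : Type*) [Field K] :
    MvPolynomial (Fin 2) K ≃ₐ[K] Polynomial (Polynomial K) :=
  (MvPolynomial.finSuccEquiv K 1).trans <| Polynomial.mapAlgEquiv <|
    (MvPolynomial.finSuccEquiv K 0).trans <| Polynomial.mapAlgEquiv <|
      MvPolynomial.isEmptyAlgEquiv K (Fin 0)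

lemma e2_X0 {K : Type*} [Field K] : e2 K (MvPolynomial.X 0) = Polynomial.X := by
  simp [e2, MvPolynomial.finSuccEquiv_X_zero]

lemma e2_X1 {K : Type*} [Field K] :
    e2 K (MvPolynomial.X 1) = Polynomial.C Polynomial.X := by
  have h1 : (1 : Fin 2) = Fin.succ 0 := rfl
  rw [e2, AlgEquiv.trans_apply, h1, MvPolynomial.finSuccEquiv_X_succ]
  simp [MvPolynomial.finSuccEquiv_X_zero]

lemma e2_aeval_X0 {K : Type*} [Field K] (a : Polynomial K) :
    e2 K (Polynomial.aeval (MvPolynomial.X 0) a) = a.map (algebraMap K (Polynomial K)) := by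
  have h := Polynomial.aeval_algHom_apply (e2 K) (MvPolynomial.X 0) a
  rw [← h, e2_X0,
    ← Polynomial.aeval_map_algebraMap (Polynomial K)
      (Polynomial.X : Polynomial (Polynomial K)) a,
    Polynomial.aeval_X_left_apply]

lemma e2_aeval_X1 {K : Type*} [Field K] (a : Polynomial K) :
    e2 K (Polynomial.aeval (MvPolynomial.X 1) a) = Polynomial.C a := by
  have h := Polynomial.aeval_algHom_apply (e2 K) (MvPolynomial.X 1) a
  rw [← h, e2_X1]
  have h2 := Polynomial.aeval_algHom_apply
    ((Polynomial.CAlgHom :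
        Polynomial K →ₐ[Polynomial K] Polynomial (Polynomial K)).restrictScalars K)
    (Polynomial.X : Polynomial K) a
  simp only [AlgHom.coe_restrictScalars'] at h2
  rw [show (Polynomial.CAlgHom : Polynomial K →ₐ[Polynomial K] Polynomial (Polynomial K))
      (Polynomial.X) = Polynomial.C Polynomial.X from rfl] at h2
  rw [h2, Polynomial.aeval_X_left_apply]
  rfl

/-- Descent step in `MvPolynomial (Fin 2) K`: cancel a factor which is a polynomial in `X 1`. -/
lemma descend_X1 {K : Type*} [Field K] {p q : Polynomial K} (hq : q ≠ 0) (hpq : IsCoprime p q)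
    (hnc : ¬ ∃ e : K, p = Polynomial.C e * q) {r : Polynomial K} (hr : r ≠ 0)
    {g : MvPolynomial (Fin 2) K}
    (h : (Polynomial.aeval (MvPolynomial.X 0 : MvPolynomial (Fin 2) K) p
        * Polynomial.aeval (MvPolynomial.X 1 : MvPolynomial (Fin 2) K) q
      - Polynomial.aeval (MvPolynomial.X 1 : MvPolynomial (Fin 2) K) p
        * Polynomial.aeval (MvPolynomial.X 0 : MvPolynomial (Fin 2) K) q) ∣
      Polynomial.aeval (MvPolynomial.X 1 : MvPolynomial (Fin 2) K) r * g) :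
    (Polynomial.aeval (MvPolynomial.X 0 : MvPolynomial (Fin 2) K) p
        * Polynomial.aeval (MvPolynomial.X 1 : MvPolynomial (Fin 2) K) q
      - Polynomial.aeval (MvPolynomial.X 1 : MvPolynomial (Fin 2) K) p
        * Polynomial.aeval (MvPolynomial.X 0 : MvPolynomial (Fin 2) K) q) ∣ g := by
  letI : DecidableEq K := Classical.decEq K
  have heA : e2 K (Polynomial.aeval (MvPolynomial.X 0 : MvPolynomial (Fin 2) K) p
        * Polynomial.aeval (MvPolynomial.X 1 : MvPolynomial (Fin 2) K) q
      - Polynomial.aeval (MvPolynomial.X 1 : MvPolynomial (Fin 2) K) p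
        * Polynomial.aeval (MvPolynomial.X 0 : MvPolynomial (Fin 2) K) q)
      = p.map (algebraMap K (Polynomial K)) * Polynomial.C q
        - Polynomial.C p * q.map (algebraMap K (Polynomial K)) := by
    rw [map_sub, map_mul, map_mul, e2_aeval_X0, e2_aeval_X1, e2_aeval_X0, e2_aeval_X1]
  have h' := map_dvd (e2 K) h
  rw [map_mul, heA, e2_aeval_X1] at h'
  have h'' := descend_prim (prim_A p q hq hpq hnc) hr h'
  rw [← heA] at h''
  have h3 := map_dvd (e2 K).symm h''
  rwa [AlgEquiv.symm_apply_apply, AlgEquiv.symm_apply_apply] at h3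

/- ### Main theorem -/

/-- If the rational function `N/D` (in lowest terms) decomposes through the
nonconstant rational function `F = p/q` (in lowest terms), then
`p(X)q(Y) - p(Y)q(X)` divides `N(X)D(Y) - N(Y)D(X)` in `K[X, Y]`. -/
theorem stmt_10 {K : Type*} [Field K] (p q N D : Polynomial K)
    (hq : q ≠ 0) (hD : D ≠ 0) (hpq : IsCoprime p q) (hND : IsCoprime N D)
    (F : RatFunc K)
    (hF : F = algebraMap (Polynomial K) (RatFunc K) p
        / algebraMap (Polynomial K) (RatFunc K) q)
    (hFnc : ∀ e : K, F ≠ algebraMap K (RatFunc K) e)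
    (hdec : ∃ N' D' : Polynomial K, Polynomial.aeval F D' ≠ 0 ∧
      algebraMap (Polynomial K) (RatFunc K) N / algebraMap (Polynomial K) (RatFunc K) D
        = Polynomial.aeval F N' / Polynomial.aeval F D') :
    (Polynomial.aeval (MvPolynomial.X 0 : MvPolynomial (Fin 2) K) p
        * Polynomial.aeval (MvPolynomial.X 1 : MvPolynomial (Fin 2) K) q
      - Polynomial.aeval (MvPolynomial.X 1 : MvPolynomial (Fin 2) K) p
        * Polynomial.aeval (MvPolynomial.X 0 : MvPolynomial (Fin 2) K) q) ∣
    (Polynomial.aeval (MvPolynomial.X 0 : MvPolynomial (Fin 2) K) N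
        * Polynomial.aeval (MvPolynomial.X 1 : MvPolynomial (Fin 2) K) D
      - Polynomial.aeval (MvPolynomial.X 1 : MvPolynomial (Fin 2) K) N
        * Polynomial.aeval (MvPolynomial.X 0 : MvPolynomial (Fin 2) K) D) := by
  classical
  set φ := algebraMap (Polynomial K) (RatFunc K) with hφdef
  have hinj : Function.Injective φ := IsFractionRing.injective _ _
  have hφq : φ q ≠ 0 := by simpa using (map_ne_zero_iff φ hinj).mpr hq
  have hφD : φ D ≠ 0 := by simpa using (map_ne_zero_iff φ hinj).mpr hD
  -- `p` is not a constant multiple of `q`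
  have hnc : ¬ ∃ e : K, p = Polynomial.C e * q := by
    rintro ⟨e0, he0⟩
    refine hFnc e0 ?_
    rw [hF, he0, map_mul, mul_div_assoc, div_self hφq, mul_one,
      IsScalarTower.algebraMap_apply K (Polynomial K) (RatFunc K), Polynomial.algebraMap_eq]
  obtain ⟨Nt, Dt, hDt, heq⟩ := hdec
  set m := max Nt.natDegree Dt.natDegree with hm
  set P := hE (algebraMap K (Polynomial K)) Nt m p q with hP
  set Q := hE (algebraMap K (Polynomial K)) Dt m p q with hQ
  have hmN : Nt.natDegree < m + 1 := Nat.lt_succ_of_le (le_max_left _ _)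
  have hmD : Dt.natDegree < m + 1 := Nat.lt_succ_of_le (le_max_right _ _)
  have hφP : φ P = Polynomial.aeval F Nt * φ q ^ m := by
    rw [hP, hE_ratFunc p q hq Nt hmN, ← hF]
  have hφQ : φ Q = Polynomial.aeval F Dt * φ q ^ m := by
    rw [hQ, hE_ratFunc p q hq Dt hmD, ← hF]
  have hQ0 : φ Q ≠ 0 := by
    rw [hφQ]; exact mul_ne_zero hDt (pow_ne_zero _ hφq)
  -- cross multiplication
  have h0 : φ N * Polynomial.aeval F Dt = Polynomial.aeval F Nt * φ D :=
    (div_eq_div_iff hφD hDt).mp heq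
  have hcross : N * Q = D * P := by
    apply hinj
    rw [map_mul, map_mul, hφP, hφQ]
    linear_combination (φ q ^ m) * h0
  have hDQ : D ∣ Q := hND.symm.dvd_of_dvd_mul_left ⟨P, hcross⟩
  obtain ⟨r, hQr⟩ := hDQ
  have hr0 : r ≠ 0 := by
    rintro rfl
    rw [mul_zero] at hQr
    exact hQ0 (by rw [hQr, map_zero])
  have hPr : P = N * r := by
    have : D * P = D * (N * r) := by rw [← hcross, hQr]; ring
    exact mul_left_cancel₀ hD this
  -- move to the bivariate world
  set M := MvPolynomial (Fin 2) K
  set ψ0 : Polynomial K →ₐ[K] M := Polynomial.aeval (MvPolynomial.X 0) with hψ0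
  set ψ1 : Polynomial K →ₐ[K] M := Polynomial.aeval (MvPolynomial.X 1) with hψ1
  have hnat : ∀ (g : Polynomial K →ₐ[K] M) (a : Polynomial K) (u v : Polynomial K),
      g (hE (algebraMap K (Polynomial K)) a m u v)
        = hE (algebraMap K M) a m (g u) (g v) := by
    intro g a u v
    have hcomp : (g : Polynomial K →+* M).comp (algebraMap K (Polynomial K))
        = algebraMap K M := RingHom.ext fun x => g.commutes x
    have := hE_map (algebraMap K (Polynomial K)) (g : Polynomial K →+* M) a m u v
    rw [hcomp] at this
    exact this
  have hkey := key_dvd (algebraMap K M) Nt Dt m (ψ0 p) (ψ0 q) (ψ1 p) (ψ1 q)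
  rw [← hnat ψ0 Nt p q, ← hnat ψ1 Dt p q, ← hnat ψ1 Nt p q, ← hnat ψ0 Dt p q] at hkey
  -- hkey : A2 ∣ ψ0 P * ψ1 Q - ψ1 P * ψ0 Q
  have hfact : ψ0 P * ψ1 Q - ψ1 P * ψ0 Q
      = ψ1 r * (ψ0 r * (ψ0 N * ψ1 D - ψ1 N * ψ0 D)) := by
    rw [hPr, hQr, map_mul, map_mul, map_mul, map_mul]
    ring
  rw [hfact] at hkey
  -- first descent: cancel ψ1 r
  have step1 := descend_X1 hq hpq hnc hr0 hkey
  -- swap the variables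
  set σ : M ≃ₐ[K] M := MvPolynomial.renameEquiv K (Equiv.swap (0 : Fin 2) 1) with hσ
  have hX0 : σ (MvPolynomial.X 0 : M) = MvPolynomial.X 1 := by
    rw [hσ, MvPolynomial.renameEquiv_apply, MvPolynomial.rename_X, Equiv.swap_apply_left]
  have hX1 : σ (MvPolynomial.X 1 : M) = MvPolynomial.X 0 := by
    rw [hσ, MvPolynomial.renameEquiv_apply, MvPolynomial.rename_X, Equiv.swap_apply_right]
  have hσ0 : ∀ a : Polynomial K, σ (ψ0 a) = ψ1 a := by
    intro a
    rw [hψ0, hψ1, ← Polynomial.aeval_algHom_apply σ (MvPolynomial.X 0) a, hX0]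
  have hσ1 : ∀ a : Polynomial K, σ (ψ1 a) = ψ0 a := by
    intro a
    rw [hψ0, hψ1, ← Polynomial.aeval_algHom_apply σ (MvPolynomial.X 1) a, hX1]
  have step2' : (ψ0 p * ψ1 q - ψ1 p * ψ0 q)
      ∣ ψ1 r * (ψ0 N * ψ1 D - ψ1 N * ψ0 D) := by
    have step2 := map_dvd σ step1
    simp only [← hψ0, ← hψ1, map_mul, map_sub, hσ0, hσ1] at step2
    obtain ⟨w, hw⟩ := step2
    exact ⟨w, by linear_combination -hw⟩
  -- second descent
  exact descend_X1 hq hpq hnc hr0 step2'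
end

section
/- Let A, B ∈ ℂ[X, Y] be nonzero polynomials and let P be a greatest common divisor of A and B in the polynomial ring ℂ[X, Y]. For t₀ ∈ ℂ let A(X, t₀), B(X, t₀), P(X, t₀) ∈ ℂ[X] denote the univariate polynomials obtained by substituting Y = t₀. Then the set of t₀ ∈ ℂ for which the univariate greatest common divisor of A(X, t₀) and B(X, t₀) is not associated (equal up to a nonzero constant factor) to P(X, t₀) is finite. -/
open Polynomial
noncomputable abbrev RR := MvPolynomial (Fin 1) ℂ

-- bridge lemma
lemma bridge (t : ℂ) (q : MvPolynomial (Fin 2) ℂ) :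
    MvPolynomial.aeval (fun i : Fin 2 => if i = 0 then Polynomial.X else Polynomial.C t) q
      = Polynomial.map (MvPolynomial.aeval (fun _ : Fin 1 => t) : RR →ₐ[ℂ] ℂ).toRingHom
          (MvPolynomial.finSuccEquiv ℂ 1 q) := by
  have : (MvPolynomial.aeval (fun i : Fin 2 => if i = 0 then Polynomial.X else Polynomial.C t) :
      MvPolynomial (Fin 2) ℂ →ₐ[ℂ] Polynomial ℂ)
      = (Polynomial.mapAlgHom (MvPolynomial.aeval (fun _ : Fin 1 => t))).comp
          (MvPolynomial.finSuccEquiv ℂ 1).toAlgHom := by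
    apply MvPolynomial.algHom_ext
    intro i
    refine Fin.cases ?_ (fun j => ?_) i
    · simp [MvPolynomial.finSuccEquiv_X_zero]
    · simp [MvPolynomial.finSuccEquiv_X_succ, Fin.succ_ne_zero]
  exact congrArg (fun f => f q) (congrArg DFunLike.coe this)

noncomputable def eR : RR ≃ₐ[ℂ] Polynomial ℂ :=
  (MvPolynomial.finSuccEquiv ℂ 0).trans (Polynomial.mapAlgEquiv (MvPolynomial.isEmptyAlgEquiv ℂ (Fin 0)))

lemma eval_eR (t : ℂ) (r : RR) :
    MvPolynomial.aeval (fun _ : Fin 1 => t) r = (eR r).eval t := by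
  have : (MvPolynomial.aeval (fun _ : Fin 1 => t) : RR →ₐ[ℂ] ℂ)
      = (Polynomial.aeval t).comp eR.toAlgHom := by
    apply MvPolynomial.algHom_ext
    intro i
    refine Fin.cases ?_ (fun j => j.elim0) i
    simp [eR, MvPolynomial.finSuccEquiv_X_zero]
  have h2 := congrArg (fun f => f r) (congrArg DFunLike.coe this)
  simpa using h2

lemma vanish_finite {r : RR} (hr : r ≠ 0) :
    {t : ℂ | MvPolynomial.aeval (fun _ : Fin 1 => t) r = 0}.Finite := by
  have h0 : eR r ≠ 0 := fun h => hr (by simpa using congrArg eR.symm h)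
  have := Polynomial.finite_setOf_isRoot h0
  apply Set.Finite.subset this
  intro t ht
  simp only [Set.mem_setOf_eq] at ht ⊢
  rw [eval_eR] at ht
  exact ht

variable {R : Type*} [CommRing R] [IsDomain R] [UniqueFactorizationMonoid R]

lemma relprime_map {a b : R[X]} (ha : a ≠ 0) (h : IsRelPrime a b) :
    IsCoprime (a.map (algebraMap R (FractionRing R))) (b.map (algebraMap R (FractionRing R))) := by
  letI := UniqueFactorizationMonoid.normalizationMonoid (α := R)
  letI := UniqueFactorizationMonoid.toNormalizedGCDMonoid R
  set K := FractionRing R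
  have hinj : Function.Injective (algebraMap R K) := IsFractionRing.injective R K
  apply IsRelPrime.isCoprime
  intro g hga hgb
  by_contra hg
  have hma : a.map (algebraMap R K) ≠ 0 := by
    simpa [Polynomial.map_eq_zero_iff hinj] using ha
  have hg0 : g ≠ 0 := fun h0 => hma (by simpa [h0] using hga)
  obtain ⟨q, hqirr, hqg⟩ := WfDvdMonoid.exists_irreducible_factor hg hg0
  -- q irreducible in K[X]; build primitive q' in R[X] with map q' associated to q
  set n := IsLocalization.integerNormalization (nonZeroDivisors R) q with hn
  obtain ⟨⟨c, hc⟩, hcs⟩ := IsLocalization.integerNormalization_map_to_map (nonZeroDivisors R) q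
  have hq0 : q ≠ 0 := hqirr.ne_zero
  have hn0 : n ≠ 0 := by
    intro h0
    rw [← hn, h0, Polynomial.map_zero] at hcs
    have h3 : (algebraMap R K c) • q = 0 := by
      rw [algebraMap_smul]; exact hcs.symm
    rw [Polynomial.smul_eq_C_mul] at h3
    rcases mul_eq_zero.1 h3 with h4 | h4
    rw [Polynomial.C_eq_zero] at h4
    · exact (mem_nonZeroDivisors_iff_ne_zero.1 hc) (hinj (by simpa using h4))
    · exact hq0 h4
  set q' := n.primPart with hq'
  have hcont0 : n.content ≠ 0 := fun h0 => hn0 (Polynomial.content_eq_zero_iff.1 h0)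
  have hu1 : IsUnit (Polynomial.C (algebraMap R K c)) :=
    Polynomial.isUnit_C.2 (isUnit_iff_ne_zero.2 (fun h0 =>
      (mem_nonZeroDivisors_iff_ne_zero.1 hc) (hinj (by simpa using h0))))
  have hu2 : IsUnit (Polynomial.C (algebraMap R K n.content)) :=
    Polynomial.isUnit_C.2 (isUnit_iff_ne_zero.2 (fun h0 => hcont0 (hinj (by simpa using h0))))
  have heq : Polynomial.C (algebraMap R K c) * q
      = Polynomial.C (algebraMap R K n.content) * (q'.map (algebraMap R K)) := by
    have h1 : n.map (algebraMap R K) = Polynomial.C (algebraMap R K c) * q := by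
      rw [← hn] at hcs
      rw [hcs, ← Polynomial.smul_eq_C_mul, algebraMap_smul]
    have h2 : n.map (algebraMap R K)
        = Polynomial.C (algebraMap R K n.content) * (q'.map (algebraMap R K)) := by
      conv_lhs => rw [n.eq_C_content_mul_primPart]
      rw [Polynomial.map_mul, Polynomial.map_C]
    rw [← h1, h2]
  have hassoc : Associated q (q'.map (algebraMap R K)) := by
    have ha1 : Associated q (Polynomial.C (algebraMap R K c) * q) :=
      ⟨hu1.unit, by simp [mul_comm, Algebra.smul_def]⟩
    have ha2 : Associated (q'.map (algebraMap R K))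
        (Polynomial.C (algebraMap R K n.content) * (q'.map (algebraMap R K))) :=
      ⟨hu2.unit, by simp [mul_comm, Algebra.smul_def]⟩
    exact (ha1.trans (heq ▸ Associated.refl _)).trans ha2.symm
  have hq'prim : q'.IsPrimitive := Polynomial.isPrimitive_primPart n
  have hq'irr : Irreducible q' := by
    rw [hq'prim.irreducible_iff_irreducible_map_fraction_map (K := K)]
    exact hassoc.irreducible hqirr
  have key : ∀ p : R[X], q'.map (algebraMap R K) ∣ p.map (algebraMap R K) → q' ∣ p := by
    intro p hdvd
    rcases eq_or_ne p 0 with rfl | hp0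
    · exact dvd_zero _
    have hpc0 : p.content ≠ 0 := fun h0 => hp0 (Polynomial.content_eq_zero_iff.1 h0)
    have hup : IsUnit (Polynomial.C (algebraMap R K p.content)) :=
      Polynomial.isUnit_C.2 (isUnit_iff_ne_zero.2 (fun h0 => hpc0 (hinj (by simpa using h0))))
    have h2 : p.map (algebraMap R K)
        = Polynomial.C (algebraMap R K p.content) * (p.primPart.map (algebraMap R K)) := by
      conv_lhs => rw [p.eq_C_content_mul_primPart]
      rw [Polynomial.map_mul, Polynomial.map_C]
    have hassp : Associated (p.primPart.map (algebraMap R K)) (p.map (algebraMap R K)) := by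
      rw [h2]; exact ⟨hup.unit, by simp [mul_comm]⟩
    have hdvd' : q'.map (algebraMap R K) ∣ p.primPart.map (algebraMap R K) :=
      hdvd.trans hassp.symm.dvd
    have : q' ∣ p.primPart :=
      hq'prim.dvd_of_fraction_map_dvd_fraction_map hdvd'
    exact this.trans (Polynomial.primPart_dvd p)
  have hqa : q' ∣ a := key a (hassoc.symm.dvd.trans (hqg.trans hga))
  have hqb : q' ∣ b := key b (hassoc.symm.dvd.trans (hqg.trans hgb))
  exact hq'irr.not_isUnit (h hqa hqb)

variable {R : Type*} [CommRing R] [IsDomain R]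

lemma clear_denoms {a b : R[X]}
    (h : IsCoprime (a.map (algebraMap R (FractionRing R))) (b.map (algebraMap R (FractionRing R)))) :
    ∃ u v : R[X], ∃ d : R, d ≠ 0 ∧ u * a + v * b = Polynomial.C d := by
  set K := FractionRing R
  have hinj : Function.Injective (algebraMap R K) := IsFractionRing.injective R K
  obtain ⟨U, V, hUV⟩ := h
  obtain ⟨⟨s, hs⟩, hsU⟩ := IsLocalization.integerNormalization_map_to_map (nonZeroDivisors R) U
  obtain ⟨⟨s', hs'⟩, hsV⟩ := IsLocalization.integerNormalization_map_to_map (nonZeroDivisors R) V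
  refine ⟨Polynomial.C s' * IsLocalization.integerNormalization (nonZeroDivisors R) U,
    Polynomial.C s * IsLocalization.integerNormalization (nonZeroDivisors R) V,
    s * s', mul_ne_zero (mem_nonZeroDivisors_iff_ne_zero.1 hs) (mem_nonZeroDivisors_iff_ne_zero.1 hs'), ?_⟩
  apply Polynomial.map_injective (algebraMap R K) hinj
  rw [Polynomial.map_add, Polynomial.map_mul, Polynomial.map_mul, Polynomial.map_mul,
    Polynomial.map_mul, hsU, hsV, Polynomial.map_C, Polynomial.map_C, Polynomial.map_C]
  have e1 : ∀ (r : R) (p : K[X]), (r : R) • p = Polynomial.C (algebraMap R K r) * p := by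
    intro r p; rw [← Polynomial.smul_eq_C_mul, algebraMap_smul]
  rw [e1, e1]
  have : (Polynomial.C ((algebraMap R K) s') * (Polynomial.C ((algebraMap R K) s) * U) * map (algebraMap R K) a +
      Polynomial.C ((algebraMap R K) s) * (Polynomial.C ((algebraMap R K) s') * V) * map (algebraMap R K) b)
      = Polynomial.C ((algebraMap R K) s) * Polynomial.C ((algebraMap R K) s') *
        (U * map (algebraMap R K) a + V * map (algebraMap R K) b) := by ring
  rw [this, hUV, mul_one, ← Polynomial.C_mul, ← map_mul]



/-- If `P` is a gcd of nonzero `A, B ∈ ℂ[X, Y]`, then for all but finitely many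
`t₀ ∈ ℂ` the univariate gcd of the specializations `A(X, t₀)` and `B(X, t₀)`
is associated to the specialization `P(X, t₀)`. -/
theorem stmt_12 (A B P : MvPolynomial (Fin 2) ℂ) (hA : A ≠ 0) (hB : B ≠ 0)
    (hPA : P ∣ A) (hPB : P ∣ B)
    (hPgcd : ∀ Q : MvPolynomial (Fin 2) ℂ, Q ∣ A → Q ∣ B → Q ∣ P) :
    {t₀ : ℂ | ¬ Associated
        (gcd (MvPolynomial.aeval
                (fun i : Fin 2 => if i = 0 then Polynomial.X else Polynomial.C t₀) A)
             (MvPolynomial.aeval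
                (fun i : Fin 2 => if i = 0 then Polynomial.X else Polynomial.C t₀) B))
        (MvPolynomial.aeval
          (fun i : Fin 2 => if i = 0 then Polynomial.X else Polynomial.C t₀) P)}.Finite := by
  classical
  set F := MvPolynomial.finSuccEquiv ℂ 1 with hF
  set a := F A with hadef
  set b := F B with hbdef
  set p := F P with hpdef
  have ha0 : a ≠ 0 := fun h => hA (by simpa [hadef] using congrArg F.symm h)
  have hpa : p ∣ a := map_dvd F.toAlgHom.toRingHom hPA
  have hpb : p ∣ b := map_dvd F.toAlgHom.toRingHom hPB
  obtain ⟨a₁, ha₁⟩ := hpa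
  obtain ⟨b₁, hb₁⟩ := hpb
  have hp0 : p ≠ 0 := fun h => ha0 (by rw [ha₁, h, zero_mul])
  have ha₁0 : a₁ ≠ 0 := fun h => ha0 (by rw [ha₁, h, mul_zero])
  have hrel : IsRelPrime a₁ b₁ := by
    intro Q hQa hQb
    have h1 : p * Q ∣ a := by rw [ha₁]; exact mul_dvd_mul_left p hQa
    have h2 : p * Q ∣ b := by rw [hb₁]; exact mul_dvd_mul_left p hQb
    have h3 : F.symm (p * Q) ∣ A := by
      have := map_dvd F.symm.toAlgHom.toRingHom h1
      simpa [hadef] using this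
    have h4 : F.symm (p * Q) ∣ B := by
      have := map_dvd F.symm.toAlgHom.toRingHom h2
      simpa [hbdef] using this
    have h5 : F.symm (p * Q) ∣ P := hPgcd _ h3 h4
    have h6 : p * Q ∣ p := by
      have := map_dvd F.toAlgHom.toRingHom h5
      simpa [hpdef] using this
    obtain ⟨w, hw⟩ := h6
    have : p * 1 = p * (Q * w) := by rw [mul_one, ← mul_assoc]; exact hw
    exact IsUnit.of_mul_eq_one (b := w) (mul_left_cancel₀ hp0 this).symm
  have hcop := relprime_map ha₁0 hrel
  obtain ⟨u, v, d, hd0, huv⟩ := clear_denoms hcop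
  apply Set.Finite.subset (vanish_finite hd0)
  intro t ht
  simp only [Set.mem_setOf_eq] at ht ⊢
  by_contra hdt
  apply ht
  set evT := (MvPolynomial.aeval (fun _ : Fin 1 => t) : MvPolynomial (Fin 1) ℂ →ₐ[ℂ] ℂ).toRingHom with hevT
  have hb2 : ∀ q : MvPolynomial (Fin 2) ℂ,
      MvPolynomial.aeval (fun i : Fin 2 => if i = 0 then Polynomial.X else Polynomial.C t) q
        = Polynomial.map evT (F q) := fun q => bridge t q
  rw [hb2 A, hb2 B, hb2 P, ← hadef, ← hbdef, ← hpdef, ha₁, hb₁,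
    Polynomial.map_mul, Polynomial.map_mul, gcd_mul_left]
  -- IsCoprime of specialized a₁ b₁
  have hco : IsCoprime (Polynomial.map evT a₁) (Polynomial.map evT b₁) := by
    have h7 : Polynomial.map evT u * Polynomial.map evT a₁
        + Polynomial.map evT v * Polynomial.map evT b₁ = Polynomial.C (evT d) := by
      rw [← Polynomial.map_mul, ← Polynomial.map_mul, ← Polynomial.map_add, huv, Polynomial.map_C]
    refine ⟨Polynomial.C (evT d)⁻¹ * Polynomial.map evT u,
      Polynomial.C (evT d)⁻¹ * Polynomial.map evT v, ?_⟩
    have : Polynomial.C (evT d)⁻¹ * (Polynomial.map evT u * Polynomial.map evT a₁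
        + Polynomial.map evT v * Polynomial.map evT b₁) = 1 := by
      have hdt' : evT d ≠ 0 := hdt
      rw [h7, ← Polynomial.C_mul, inv_mul_cancel₀ hdt', Polynomial.C_1]
    rw [← this]; ring
  have hgu : IsUnit (gcd (Polynomial.map evT a₁) (Polynomial.map evT b₁)) :=
    hco.isUnit_of_dvd' (gcd_dvd_left _ _) (gcd_dvd_right _ _)
  have h8 : Associated (normalize (Polynomial.map evT p) * gcd (Polynomial.map evT a₁) (Polynomial.map evT b₁))
      (normalize (Polynomial.map evT p)) := by
    have h9 := Associated.mul_left (normalize (Polynomial.map evT p))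
      (associated_one_iff_isUnit.mpr hgu)
    simpa using h9
  exact h8.trans (normalize_associated _)
end
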